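/- arXiv:2504.18290 — 8 statements merged into one kernel-verified Lean document; each statement's English description precedes it below -/
import Mathlib

section
/- Let T > 0, let π = (π_n) be a sequence of partitions of [0,T] with mesh tending to 0, let p > 2, and let x : [0,T] → ℝ be continuous with finite p-th variation along π. Write φ(t) = [x]^(p)_π(t) and assume φ is continuously differentiable with 0 < c ≤ φ′ ≤ C < ∞ on [0,T]. For q > 0 set S^{(q)}_n(t) = Σ_{t^n_{i+1} ≤ t} (φ(t^n_{i+1}) − φ(t^n_i))^{(q−2)/q} (x(t^n_{i+1}) − x(t^n_i))². If for some t ∈ (0,T] the limit lim_{n→∞} S^{(p)}_n(t) exists, is finite and strictly positive, then for every q > p one has lim_{n→∞} S^{(q)}_n(t) = 0. -/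
open Filter Topology

/-- If the scaled quadratic variation sums of index `p` converge to a finite
strictly positive limit at some `t ∈ (0,T]`, then for every `q > p` the index-`q` sums tend to `0`. -/
theorem scaled_qv_switch_zero_of_lim_pos
    (T : ℝ) (hT : 0 < T)
    (π : ℕ → ℕ → ℝ) (N : ℕ → ℕ)
    (hN : ∀ n, 0 < N n)
    (hπ0 : ∀ n, π n 0 = 0)
    (hπT : ∀ n, π n (N n) = T)
    (hπmono : ∀ n, ∀ i < N n, π n i < π n (i + 1))
    (hmesh : ∀ ε : ℝ, 0 < ε → ∀ᶠ n in atTop, ∀ i < N n, π n (i + 1) - π n i < ε)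
    (p : ℝ) (hp : 2 < p)
    (x : ℝ → ℝ) (hx : ContinuousOn x (Set.Icc 0 T))
    (φ : ℝ → ℝ)
    (hφcont : ContinuousOn φ (Set.Icc 0 T))
    (hφmono : MonotoneOn φ (Set.Icc 0 T))
    (hφ : ∀ t ∈ Set.Icc 0 T,
      Tendsto (fun n => ∑ i ∈ Finset.range (N n),
          if π n (i + 1) ≤ t then |x (π n (i + 1)) - x (π n i)| ^ p else 0)
        atTop (𝓝 (φ t)))
    (φ' : ℝ → ℝ) (c C : ℝ) (hc : 0 < c)
    (hderiv : ∀ t ∈ Set.Icc 0 T, HasDerivAt φ (φ' t) t)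
    (hφ'cont : ContinuousOn φ' (Set.Icc 0 T))
    (hφ'bd : ∀ t ∈ Set.Icc 0 T, c ≤ φ' t ∧ φ' t ≤ C)
    (t : ℝ) (ht : t ∈ Set.Ioc 0 T) (L : ℝ) (hL : 0 < L)
    (hlim : Tendsto (fun n => ∑ i ∈ Finset.range (N n),
        if π n (i + 1) ≤ t then
          (φ (π n (i + 1)) - φ (π n i)) ^ ((p - 2) / p)
            * (x (π n (i + 1)) - x (π n i)) ^ 2
        else 0) atTop (𝓝 L)) :
    ∀ q : ℝ, p < q →
      Tendsto (fun n => ∑ i ∈ Finset.range (N n),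
        if π n (i + 1) ≤ t then
          (φ (π n (i + 1)) - φ (π n i)) ^ ((q - 2) / q)
            * (x (π n (i + 1)) - x (π n i)) ^ 2
        else 0) atTop (𝓝 0) := by
  intro q hq
  have hp0 : (0:ℝ) < p := by linarith
  have hq0 : (0:ℝ) < q := by linarith
  -- partition points lie in [0, T]
  have hle : ∀ n k, k ≤ N n → ∀ j ≤ k, π n j ≤ π n k := by
    intro n k
    induction k with
    | zero => intro _ j hj; have : j = 0 := Nat.le_zero.mp hj; simp [this]
    | succ m ih =>
      intro hk j hj
      rcases Nat.lt_or_ge j (m + 1) with h | h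
      · exact (ih (by omega) j (by omega)).trans (hπmono n m (by omega)).le
      · have : j = m + 1 := by omega
        simp [this]
  have hmem : ∀ n, ∀ i ≤ N n, π n i ∈ Set.Icc (0:ℝ) T := by
    intro n i hi
    constructor
    · rw [← hπ0 n]; exact hle n i hi 0 (Nat.zero_le i)
    · rw [← hπT n]; exact hle n (N n) le_rfl i hi
  set δ : ℝ := 2 / p - 2 / q with hδdef
  have hδpos : 0 < δ := by
    have h2q : (2:ℝ) / q < 2 / p := div_lt_div_of_pos_left (by norm_num) hp0 hq
    exact sub_pos.mpr h2q
  have hsplit : (q - 2) / q = δ + (p - 2) / p := by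
    rw [hδdef]; field_simp; ring
  have hqe : (0:ℝ) < (q - 2) / q := div_pos (by linarith) hq0
  have key : ∀ a b η : ℝ, 0 ≤ a → a ≤ η → 0 ≤ b →
      a ^ ((q - 2) / q) * b ≤ η ^ δ * (a ^ ((p - 2) / p) * b) := by
    intro a b η ha haη hb
    have h1 : a ^ ((q - 2) / q) = a ^ δ * a ^ ((p - 2) / p) := by
      rw [hsplit, Real.rpow_add' ha (by rw [← hsplit]; exact hqe.ne')]
    rw [h1, mul_assoc]
    refine mul_le_mul_of_nonneg_right (Real.rpow_le_rpow ha haη hδpos.le) ?_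
    exact mul_nonneg (Real.rpow_nonneg ha _) hb
  rw [NormedAddCommGroup.tendsto_nhds_zero]
  intro ε hε
  have hL1 : (0:ℝ) < L + 1 := by linarith
  set A : ℝ := ε / (2 * (L + 1)) with hAdef
  have hApos : 0 < A := by positivity
  set η : ℝ := A ^ δ⁻¹ with hηdef
  have hηpos : 0 < η := Real.rpow_pos_of_pos hApos _
  have hηδ : η ^ δ = A := by
    rw [hηdef, ← Real.rpow_mul hApos.le, inv_mul_cancel₀ hδpos.ne', Real.rpow_one]
  have hUC : UniformContinuousOn φ (Set.Icc 0 T) :=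
    isCompact_Icc.uniformContinuousOn_of_continuous hφcont
  obtain ⟨r, hr, hφη⟩ := Metric.uniformContinuousOn_iff.mp hUC η hηpos
  filter_upwards [hmesh r hr, hlim.eventually_lt_const (show L < L + 1 by linarith)]
    with n hmeshn hSp
  have hΔφ : ∀ i < N n, 0 ≤ φ (π n (i + 1)) - φ (π n i) := by
    intro i hi
    exact sub_nonneg.mpr (hφmono (hmem n i hi.le) (hmem n (i + 1) hi) (hπmono n i hi).le)
  have hΔφη : ∀ i < N n, φ (π n (i + 1)) - φ (π n i) ≤ η := by
    intro i hi
    have hd := hφη (π n (i + 1)) (hmem n (i + 1) hi) (π n i) (hmem n i hi.le)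
      (by rw [Real.dist_eq, abs_of_nonneg (by linarith [hπmono n i hi])]; exact hmeshn i hi)
    rw [Real.dist_eq] at hd
    calc φ (π n (i + 1)) - φ (π n i) ≤ |φ (π n (i + 1)) - φ (π n i)| := le_abs_self _
      _ ≤ η := hd.le
  have hSq_nonneg : (0:ℝ) ≤ ∑ i ∈ Finset.range (N n),
      (if π n (i + 1) ≤ t then
        (φ (π n (i + 1)) - φ (π n i)) ^ ((q - 2) / q)
          * (x (π n (i + 1)) - x (π n i)) ^ 2 else 0) := by
    refine Finset.sum_nonneg fun i hi => ?_
    by_cases hcond : π n (i + 1) ≤ t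
    · simp only [hcond, if_true]
      exact mul_nonneg (Real.rpow_nonneg (hΔφ i (Finset.mem_range.mp hi)) _) (sq_nonneg _)
    · simp [hcond]
  have hSp_nonneg : (0:ℝ) ≤ ∑ i ∈ Finset.range (N n),
      (if π n (i + 1) ≤ t then
        (φ (π n (i + 1)) - φ (π n i)) ^ ((p - 2) / p)
          * (x (π n (i + 1)) - x (π n i)) ^ 2 else 0) := by
    refine Finset.sum_nonneg fun i hi => ?_
    by_cases hcond : π n (i + 1) ≤ t
    · simp only [hcond, if_true]
      exact mul_nonneg (Real.rpow_nonneg (hΔφ i (Finset.mem_range.mp hi)) _) (sq_nonneg _)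
    · simp [hcond]
  have hsum : (∑ i ∈ Finset.range (N n),
      (if π n (i + 1) ≤ t then
        (φ (π n (i + 1)) - φ (π n i)) ^ ((q - 2) / q)
          * (x (π n (i + 1)) - x (π n i)) ^ 2 else 0))
      ≤ η ^ δ * ∑ i ∈ Finset.range (N n),
      (if π n (i + 1) ≤ t then
        (φ (π n (i + 1)) - φ (π n i)) ^ ((p - 2) / p)
          * (x (π n (i + 1)) - x (π n i)) ^ 2 else 0) := by
    rw [Finset.mul_sum]
    refine Finset.sum_le_sum fun i hi => ?_
    by_cases hcond : π n (i + 1) ≤ t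
    · simp only [hcond, if_true]
      exact key _ _ _ (hΔφ i (Finset.mem_range.mp hi)) (hΔφη i (Finset.mem_range.mp hi))
        (sq_nonneg _)
    · simp [hcond]
  rw [Real.norm_eq_abs, abs_of_nonneg hSq_nonneg]
  calc (∑ i ∈ Finset.range (N n),
      (if π n (i + 1) ≤ t then
        (φ (π n (i + 1)) - φ (π n i)) ^ ((q - 2) / q)
          * (x (π n (i + 1)) - x (π n i)) ^ 2 else 0))
      ≤ η ^ δ * ∑ i ∈ Finset.range (N n),
        (if π n (i + 1) ≤ t then
          (φ (π n (i + 1)) - φ (π n i)) ^ ((p - 2) / p)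
            * (x (π n (i + 1)) - x (π n i)) ^ 2 else 0) := hsum
    _ ≤ η ^ δ * (L + 1) := by
        rw [hηδ]
        exact mul_le_mul_of_nonneg_left hSp.le hApos.le
    _ < ε := by
        rw [hηδ, hAdef]
        rw [div_mul_eq_mul_div, mul_comm]
        rw [div_lt_iff₀ (by positivity)]
        nlinarith
end

section
/- Let T > 0, let π = (π_n) be a sequence of partitions of [0,T] with mesh tending to 0, let p > 2, and let x : [0,T] → ℝ be continuous with finite p-th variation along π. Write φ(t) = [x]^(p)_π(t) and assume φ is continuously differentiable with 0 < c ≤ φ′ ≤ C < ∞ on [0,T]. For q > 0 set S^{(q)}_n(t) = Σ_{t^n_{i+1} ≤ t} (φ(t^n_{i+1}) − φ(t^n_i))^{(q−2)/q} (x(t^n_{i+1}) − x(t^n_i))². If for some t ∈ (0,T] the limit lim_{n→∞} S^{(p)}_n(t) exists, is finite and strictly positive, then for every q with 0 < q < p one has lim_{n→∞} S^{(q)}_n(t) = +∞ (the sums tend to infinity). -/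
open Filter Topology

/-- If the scaled quadratic variation sums of index `p` converge to a finite
strictly positive limit at some `t ∈ (0,T]`, then for every `0 < q < p` the index-`q` sums tend
to `+∞`. -/
theorem scaled_qv_switch_infty_of_lim_pos
    (T : ℝ) (hT : 0 < T)
    (π : ℕ → ℕ → ℝ) (N : ℕ → ℕ)
    (hN : ∀ n, 0 < N n)
    (hπ0 : ∀ n, π n 0 = 0)
    (hπT : ∀ n, π n (N n) = T)
    (hπmono : ∀ n, ∀ i < N n, π n i < π n (i + 1))
    (hmesh : ∀ ε : ℝ, 0 < ε → ∀ᶠ n in atTop, ∀ i < N n, π n (i + 1) - π n i < ε)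
    (p : ℝ) (hp : 2 < p)
    (x : ℝ → ℝ) (hx : ContinuousOn x (Set.Icc 0 T))
    (φ : ℝ → ℝ)
    (hφcont : ContinuousOn φ (Set.Icc 0 T))
    (hφmono : MonotoneOn φ (Set.Icc 0 T))
    (hφ : ∀ t ∈ Set.Icc 0 T,
      Tendsto (fun n => ∑ i ∈ Finset.range (N n),
          if π n (i + 1) ≤ t then |x (π n (i + 1)) - x (π n i)| ^ p else 0)
        atTop (𝓝 (φ t)))
    (φ' : ℝ → ℝ) (c C : ℝ) (hc : 0 < c)
    (hderiv : ∀ t ∈ Set.Icc 0 T, HasDerivAt φ (φ' t) t)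
    (hφ'cont : ContinuousOn φ' (Set.Icc 0 T))
    (hφ'bd : ∀ t ∈ Set.Icc 0 T, c ≤ φ' t ∧ φ' t ≤ C)
    (t : ℝ) (ht : t ∈ Set.Ioc 0 T) (L : ℝ) (hL : 0 < L)
    (hlim : Tendsto (fun n => ∑ i ∈ Finset.range (N n),
        if π n (i + 1) ≤ t then
          (φ (π n (i + 1)) - φ (π n i)) ^ ((p - 2) / p)
            * (x (π n (i + 1)) - x (π n i)) ^ 2
        else 0) atTop (𝓝 L)) :
    ∀ q : ℝ, 0 < q → q < p →
      Tendsto (fun n => ∑ i ∈ Finset.range (N n),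
        if π n (i + 1) ≤ t then
          (φ (π n (i + 1)) - φ (π n i)) ^ ((q - 2) / q)
            * (x (π n (i + 1)) - x (π n i)) ^ 2
        else 0) atTop atTop := by

  intro q hq hqp
  have hp0 : (0:ℝ) < p := by linarith
  have h0T : (0:ℝ) ∈ Set.Icc 0 T := ⟨le_refl 0, hT.le⟩
  have hC : 0 < C := lt_of_lt_of_le hc ((hφ'bd 0 h0T).1.trans (hφ'bd 0 h0T).2)
  -- monotonicity of partitions
  have hπle : ∀ n, ∀ i j : ℕ, i ≤ j → j ≤ N n → π n i ≤ π n j := by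
    intro n i j hij hjN
    induction j with
    | zero =>
      interval_cases i
      exact le_refl _
    | succ j ih =>
      rcases Nat.eq_or_lt_of_le hij with h | h
      · rw [h]
      · exact le_trans (ih (Nat.lt_succ_iff.mp h) (le_trans (Nat.le_succ j) hjN))
          (le_of_lt (hπmono n j (Nat.lt_of_succ_le hjN)))
  have hπmem : ∀ n, ∀ i ≤ N n, π n i ∈ Set.Icc 0 T := by
    intro n i hi
    constructor
    · rw [← hπ0 n]; exact hπle n 0 i (Nat.zero_le _) hi
    · rw [← hπT n]; exact hπle n i (N n) hi le_rfl
  -- mean value theorem bounds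
  have hΔφ : ∀ n, ∀ i < N n,
      c * (π n (i+1) - π n i) ≤ φ (π n (i+1)) - φ (π n i) ∧
      φ (π n (i+1)) - φ (π n i) ≤ C * (π n (i+1) - π n i) := by
    intro n i hi
    have hab : π n i < π n (i+1) := hπmono n i hi
    have haT : π n i ∈ Set.Icc 0 T := hπmem n i hi.le
    have hbT : π n (i+1) ∈ Set.Icc 0 T := hπmem n (i+1) hi
    have hsub : Set.Icc (π n i) (π n (i+1)) ⊆ Set.Icc 0 T :=
      Set.Icc_subset_Icc haT.1 hbT.2
    obtain ⟨ξ, hξ, hslope⟩ := exists_hasDerivAt_eq_slope φ φ' hab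
      (hφcont.mono hsub)
      (fun y hy => hderiv y (hsub (Set.Ioo_subset_Icc_self hy)))
    have hξT : ξ ∈ Set.Icc 0 T := hsub (Set.Ioo_subset_Icc_self hξ)
    have h1 := (hφ'bd ξ hξT).1
    have h2 := (hφ'bd ξ hξT).2
    rw [hslope] at h1 h2
    have hba : 0 < π n (i+1) - π n i := by linarith
    constructor
    · have := mul_le_mul_of_nonneg_right h1 hba.le
      rwa [div_mul_cancel₀ _ hba.ne'] at this
    · have := mul_le_mul_of_nonneg_right h2 hba.le
      rwa [div_mul_cancel₀ _ hba.ne'] at this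
  -- exponent gap
  have hq0 : q ≠ 0 := hq.ne'
  have hδeq : (p-2)/p - (q-2)/q = 2*(p-q)/(p*q) := by
    field_simp
    ring
  have hδ : 0 < (p-2)/p - (q-2)/q := by
    rw [hδeq]
    apply div_pos (by linarith) (by positivity)
  set δ : ℝ := (p-2)/p - (q-2)/q with hδdef
  rw [tendsto_atTop]
  intro K
  set K' : ℝ := max K 1 with hK'def
  have hK' : 0 < K' := lt_of_lt_of_le one_pos (le_max_right _ _)
  set M : ℝ := 2*K'/L with hMdef
  have hM : 0 < M := by positivity
  set B : ℝ := (1/M) ^ (1/δ) with hBdef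
  have hB : 0 < B := Real.rpow_pos_of_pos (by positivity) _
  have hBδ : B ^ δ = 1/M := by
    rw [hBdef, ← Real.rpow_mul (by positivity), one_div_mul_cancel hδ.ne', Real.rpow_one]
  have hε : 0 < B / C := div_pos hB hC
  have hlim' : ∀ᶠ n in atTop, L/2 < ∑ i ∈ Finset.range (N n),
      (if π n (i + 1) ≤ t then
        (φ (π n (i + 1)) - φ (π n i)) ^ ((p - 2) / p)
          * (x (π n (i + 1)) - x (π n i)) ^ 2
      else 0) :=
    hlim.eventually (eventually_gt_nhds (by linarith))
  filter_upwards [hmesh (B/C) hε, hlim'] with n hn hSp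
  have key : ∀ i ∈ Finset.range (N n),
      M * (if π n (i + 1) ≤ t then
        (φ (π n (i + 1)) - φ (π n i)) ^ ((p - 2) / p)
          * (x (π n (i + 1)) - x (π n i)) ^ 2
      else 0)
      ≤ (if π n (i + 1) ≤ t then
        (φ (π n (i + 1)) - φ (π n i)) ^ ((q - 2) / q)
          * (x (π n (i + 1)) - x (π n i)) ^ 2
      else 0) := by
    intro i hi
    rw [Finset.mem_range] at hi
    by_cases hcond : π n (i+1) ≤ t
    · simp only [hcond, if_true]
      obtain ⟨h1, h2⟩ := hΔφ n i hi
      have hΔt : 0 < π n (i+1) - π n i := by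
        have := hπmono n i hi; linarith
      set D : ℝ := φ (π n (i+1)) - φ (π n i) with hD
      have hD0 : 0 < D := lt_of_lt_of_le (by positivity) h1
      have hDB : D ≤ B := by
        have hmeshi := hn i hi
        calc D ≤ C * (π n (i+1) - π n i) := h2
          _ ≤ C * (B/C) := by nlinarith
          _ = B := by field_simp
      have hDδ : D ^ δ ≤ 1/M := by
        rw [← hBδ]
        exact Real.rpow_le_rpow hD0.le hDB hδ.le
      have hDδ0 : 0 < D ^ δ := Real.rpow_pos_of_pos hD0 δ
      have hmul : M * D ^ δ ≤ 1 := by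
        calc M * D ^ δ ≤ M * (1/M) := mul_le_mul_of_nonneg_left hDδ hM.le
          _ = 1 := mul_one_div_cancel hM.ne'
      have hMle : M ≤ D ^ (-δ) := by
        rw [Real.rpow_neg hD0.le, ← one_div]
        exact (le_div_iff₀ hDδ0).mpr hmul
      have hexp : -δ + (p-2)/p = (q-2)/q := by rw [hδdef]; ring
      calc M * (D ^ ((p-2)/p) * (x (π n (i + 1)) - x (π n i)) ^ 2)
          ≤ D ^ (-δ) * (D ^ ((p-2)/p) * (x (π n (i + 1)) - x (π n i)) ^ 2) := by
            apply mul_le_mul_of_nonneg_right hMle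
            positivity
        _ = D ^ (-δ + (p-2)/p) * (x (π n (i + 1)) - x (π n i)) ^ 2 := by
            rw [Real.rpow_add hD0]; ring
        _ = D ^ ((q-2)/q) * (x (π n (i + 1)) - x (π n i)) ^ 2 := by rw [hexp]
    · simp [hcond]
  have hsum : M * (∑ i ∈ Finset.range (N n),
      if π n (i + 1) ≤ t then
        (φ (π n (i + 1)) - φ (π n i)) ^ ((p - 2) / p)
          * (x (π n (i + 1)) - x (π n i)) ^ 2
      else 0)
      ≤ ∑ i ∈ Finset.range (N n),
      (if π n (i + 1) ≤ t then
        (φ (π n (i + 1)) - φ (π n i)) ^ ((q - 2) / q)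
          * (x (π n (i + 1)) - x (π n i)) ^ 2
      else 0) := by
    rw [Finset.mul_sum]
    exact Finset.sum_le_sum key
  have hfin : K' ≤ ∑ i ∈ Finset.range (N n),
      (if π n (i + 1) ≤ t then
        (φ (π n (i + 1)) - φ (π n i)) ^ ((q - 2) / q)
          * (x (π n (i + 1)) - x (π n i)) ^ 2
      else 0) := by
    calc K' = M * (L/2) := by rw [hMdef]; field_simp
      _ ≤ M * (∑ i ∈ Finset.range (N n),
          if π n (i + 1) ≤ t then
            (φ (π n (i + 1)) - φ (π n i)) ^ ((p - 2) / p)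
              * (x (π n (i + 1)) - x (π n i)) ^ 2
          else 0) := mul_le_mul_of_nonneg_left hSp.le hM.le
      _ ≤ _ := hsum
  exact le_trans (le_max_left K 1) hfin
end

section
/- Let T > 0, let π = (π_n) be a sequence of partitions of [0,T] with mesh tending to 0, let p > 2, and let x : [0,T] → ℝ be continuous with finite p-th variation along π. Write φ(t) = [x]^(p)_π(t) and assume φ is continuously differentiable with 0 < c ≤ φ′ ≤ C < ∞ on [0,T]. For q > 0 set S^{(q)}_n(t) = Σ_{t^n_{i+1} ≤ t} (φ(t^n_{i+1}) − φ(t^n_i))^{(q−2)/q} (x(t^n_{i+1}) − x(t^n_i))². If for some t ∈ [0,T] one has limsup_{n→∞} S^{(p)}_n(t) < ∞, then for every q > p one has lim_{n→∞} S^{(q)}_n(t) = 0. -/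
open Filter Topology

/-- If the limsup of the scaled quadratic variation sums of index `p` at some
`t ∈ [0,T]` is finite, then for every `q > p` the index-`q` sums tend to `0`. -/
theorem scaled_qv_switch_zero_of_limsup_lt_top
    (T : ℝ) (hT : 0 < T)
    (π : ℕ → ℕ → ℝ) (N : ℕ → ℕ)
    (hN : ∀ n, 0 < N n)
    (hπ0 : ∀ n, π n 0 = 0)
    (hπT : ∀ n, π n (N n) = T)
    (hπmono : ∀ n, ∀ i < N n, π n i < π n (i + 1))
    (hmesh : ∀ ε : ℝ, 0 < ε → ∀ᶠ n in atTop, ∀ i < N n, π n (i + 1) - π n i < ε)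
    (p : ℝ) (hp : 2 < p)
    (x : ℝ → ℝ) (hx : ContinuousOn x (Set.Icc 0 T))
    (φ : ℝ → ℝ)
    (hφcont : ContinuousOn φ (Set.Icc 0 T))
    (hφmono : MonotoneOn φ (Set.Icc 0 T))
    (hφ : ∀ t ∈ Set.Icc 0 T,
      Tendsto (fun n => ∑ i ∈ Finset.range (N n),
          if π n (i + 1) ≤ t then |x (π n (i + 1)) - x (π n i)| ^ p else 0)
        atTop (𝓝 (φ t)))
    (φ' : ℝ → ℝ) (c C : ℝ) (hc : 0 < c)
    (hderiv : ∀ t ∈ Set.Icc 0 T, HasDerivAt φ (φ' t) t)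
    (hφ'cont : ContinuousOn φ' (Set.Icc 0 T))
    (hφ'bd : ∀ t ∈ Set.Icc 0 T, c ≤ φ' t ∧ φ' t ≤ C)
    (t : ℝ) (ht : t ∈ Set.Icc 0 T)
    (hsup : Filter.limsup (fun n => (((fun n => ∑ i ∈ Finset.range (N n),
        if π n (i + 1) ≤ t then
          (φ (π n (i + 1)) - φ (π n i)) ^ ((p - 2) / p)
            * (x (π n (i + 1)) - x (π n i)) ^ 2
        else 0) n : ℝ) : EReal)) atTop < ⊤) :
    ∀ q : ℝ, p < q →
      Tendsto (fun n => ∑ i ∈ Finset.range (N n),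
        if π n (i + 1) ≤ t then
          (φ (π n (i + 1)) - φ (π n i)) ^ ((q - 2) / q)
            * (x (π n (i + 1)) - x (π n i)) ^ 2
        else 0) atTop (𝓝 0) := by

  intro q hq
  have hq2 : (2:ℝ) < q := lt_trans hp hq
  have hppos : (0:ℝ) < p := lt_trans two_pos hp
  have hqpos : (0:ℝ) < q := lt_trans two_pos hq2
  obtain ⟨α, hαdef⟩ : ∃ α : ℝ, α = 2 / p - 2 / q := ⟨_, rfl⟩
  have hα : 0 < α := by
    have h2 : 2 / q < 2 / p := (div_lt_div_iff_of_pos_left two_pos hqpos hppos).mpr hq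
    rw [hαdef]; linarith
  -- monotonicity of partition points
  have hπle : ∀ n, ∀ i j, i ≤ j → j ≤ N n → π n i ≤ π n j := by
    intro n i j hij hj
    induction j with
    | zero => interval_cases i; exact le_rfl
    | succ j ih =>
      rcases Nat.eq_or_lt_of_le hij with h | h
      · rw [h]
      · have hij' : i ≤ j := Nat.lt_succ_iff.mp h
        exact le_trans (ih hij' (le_trans (Nat.le_succ j) hj))
          (le_of_lt (hπmono n j (Nat.lt_of_succ_le hj)))
  have hπmem : ∀ n i, i ≤ N n → π n i ∈ Set.Icc 0 T := by
    intro n i hi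
    constructor
    · rw [← hπ0 n]; exact hπle n 0 i (Nat.zero_le _) hi
    · rw [← hπT n]; exact hπle n i (N n) hi le_rfl
  have h0mem : (0:ℝ) ∈ Set.Icc 0 T := ⟨le_rfl, hT.le⟩
  have hC : 0 < C := lt_of_lt_of_le hc (le_trans (hφ'bd 0 h0mem).1 (hφ'bd 0 h0mem).2)
  -- extract a real bound from the limsup hypothesis
  obtain ⟨z, hz1, hz2⟩ := exists_between hsup
  have hzbot : z ≠ ⊥ := by
    intro h; rw [h] at hz1; exact not_lt_bot hz1
  lift z to ℝ using ⟨hz2.ne, hzbot⟩ with M hM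
  have hev : ∀ᶠ n in atTop,
      (∑ i ∈ Finset.range (N n),
        if π n (i + 1) ≤ t then
          (φ (π n (i + 1)) - φ (π n i)) ^ ((p - 2) / p)
            * (x (π n (i + 1)) - x (π n i)) ^ 2
        else 0) < M := by
    have := Filter.eventually_lt_of_limsup_lt hz1
    filter_upwards [this] with n hn
    exact_mod_cast hn
  rw [Metric.tendsto_nhds]
  intro ε hε
  set M' : ℝ := max M 1 with hM'def
  have hM' : 0 < M' := lt_of_lt_of_le one_pos (le_max_right _ _)
  have hMM' : M ≤ M' := le_max_left _ _
  have hεM' : 0 < ε / M' := div_pos hε hM'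
  set r : ℝ := (ε / M') ^ (α⁻¹) with hrdef
  have hr : 0 < r := Real.rpow_pos_of_pos hεM' _
  have hδ : 0 < r / C := div_pos hr hC
  filter_upwards [hmesh (r / C) hδ, hev] with n hmeshn hSpM
  -- per-increment bound on φ via the mean value theorem
  have hΔ : ∀ i < N n, 0 < φ (π n (i+1)) - φ (π n i) ∧ φ (π n (i+1)) - φ (π n i) < r := by
    intro i hi
    have hab : π n i < π n (i+1) := hπmono n i hi
    have ha : π n i ∈ Set.Icc 0 T := hπmem n i hi.le
    have hb : π n (i+1) ∈ Set.Icc 0 T := hπmem n (i+1) (Nat.succ_le_of_lt hi)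
    obtain ⟨ξ, hξ, hslope⟩ := exists_hasDerivAt_eq_slope φ φ' hab
      (hφcont.mono (Set.Icc_subset_Icc ha.1 hb.2))
      (fun y hy => hderiv y ⟨le_trans ha.1 hy.1.le, le_trans hy.2.le hb.2⟩)
    have hξmem : ξ ∈ Set.Icc 0 T := ⟨le_trans ha.1 hξ.1.le, le_trans hξ.2.le hb.2⟩
    have hba : 0 < π n (i+1) - π n i := sub_pos.mpr hab
    have hΔeq : φ (π n (i+1)) - φ (π n i) = φ' ξ * (π n (i+1) - π n i) := by
      rw [hslope]; field_simp
    constructor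
    · rw [hΔeq]
      exact mul_pos (lt_of_lt_of_le hc (hφ'bd ξ hξmem).1) hba
    · rw [hΔeq]
      calc φ' ξ * (π n (i+1) - π n i) ≤ C * (π n (i+1) - π n i) :=
            mul_le_mul_of_nonneg_right (hφ'bd ξ hξmem).2 hba.le
        _ < C * (r / C) := mul_lt_mul_of_pos_left (hmeshn i hi) hC
        _ = r := by field_simp
  have hrα : r ^ α = ε / M' := by
    rw [hrdef, ← Real.rpow_mul hεM'.le, inv_mul_cancel₀ hα.ne', Real.rpow_one]
  -- termwise comparison
  have hterm : ∀ i ∈ Finset.range (N n),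
      (if π n (i + 1) ≤ t then
          (φ (π n (i + 1)) - φ (π n i)) ^ ((q - 2) / q)
            * (x (π n (i + 1)) - x (π n i)) ^ 2
        else 0) ≤ (ε / M') *
      (if π n (i + 1) ≤ t then
          (φ (π n (i + 1)) - φ (π n i)) ^ ((p - 2) / p)
            * (x (π n (i + 1)) - x (π n i)) ^ 2
        else 0) := by
    intro i hi
    by_cases h : π n (i + 1) ≤ t
    · simp only [if_pos h]
      obtain ⟨h1, h2⟩ := hΔ i (Finset.mem_range.mp hi)
      have heq : (φ (π n (i + 1)) - φ (π n i)) ^ ((q - 2) / q)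
          = (φ (π n (i + 1)) - φ (π n i)) ^ α
            * (φ (π n (i + 1)) - φ (π n i)) ^ ((p - 2) / p) := by
        rw [← Real.rpow_add h1]
        congr 1
        rw [hαdef]; field_simp; ring
      rw [heq, mul_assoc]
      apply mul_le_mul_of_nonneg_right _ (by positivity)
      calc (φ (π n (i + 1)) - φ (π n i)) ^ α ≤ r ^ α :=
            Real.rpow_le_rpow h1.le h2.le hα.le
        _ = ε / M' := hrα
    · simp [h]
  have hSq_nonneg : 0 ≤ ∑ i ∈ Finset.range (N n),
      if π n (i + 1) ≤ t then
        (φ (π n (i + 1)) - φ (π n i)) ^ ((q - 2) / q)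
          * (x (π n (i + 1)) - x (π n i)) ^ 2
      else 0 := by
    apply Finset.sum_nonneg
    intro i hi
    by_cases h : π n (i + 1) ≤ t
    · simp only [if_pos h]
      obtain ⟨h1, _⟩ := hΔ i (Finset.mem_range.mp hi)
      positivity
    · simp [h]
  have hSp_nonneg : 0 ≤ ∑ i ∈ Finset.range (N n),
      if π n (i + 1) ≤ t then
        (φ (π n (i + 1)) - φ (π n i)) ^ ((p - 2) / p)
          * (x (π n (i + 1)) - x (π n i)) ^ 2
      else 0 := by
    apply Finset.sum_nonneg
    intro i hi
    by_cases h : π n (i + 1) ≤ t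
    · simp only [if_pos h]
      obtain ⟨h1, _⟩ := hΔ i (Finset.mem_range.mp hi)
      positivity
    · simp [h]
  have hSq_le : (∑ i ∈ Finset.range (N n),
      if π n (i + 1) ≤ t then
        (φ (π n (i + 1)) - φ (π n i)) ^ ((q - 2) / q)
          * (x (π n (i + 1)) - x (π n i)) ^ 2
      else 0) ≤ (ε / M') * ∑ i ∈ Finset.range (N n),
      if π n (i + 1) ≤ t then
        (φ (π n (i + 1)) - φ (π n i)) ^ ((p - 2) / p)
          * (x (π n (i + 1)) - x (π n i)) ^ 2
      else 0 := by
    rw [Finset.mul_sum]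
    exact Finset.sum_le_sum hterm
  rw [Real.dist_eq, sub_zero, abs_of_nonneg hSq_nonneg]
  calc (∑ i ∈ Finset.range (N n),
      if π n (i + 1) ≤ t then
        (φ (π n (i + 1)) - φ (π n i)) ^ ((q - 2) / q)
          * (x (π n (i + 1)) - x (π n i)) ^ 2
      else 0) ≤ (ε / M') * _ := hSq_le
    _ < (ε / M') * M' := mul_lt_mul_of_pos_left (lt_of_lt_of_le hSpM hMM') hεM'
    _ = ε := div_mul_cancel₀ ε hM'.ne'
end

section
/- Let T > 0, let π = (π_n) be a sequence of partitions of [0,T] with mesh tending to 0, let p > 2, and let x : [0,T] → ℝ be continuous with finite p-th variation along π. Write φ(t) = [x]^(p)_π(t) and assume φ is continuously differentiable with 0 < c ≤ φ′ ≤ C < ∞ on [0,T]. For q > 0 set S^{(q)}_n(t) = Σ_{t^n_{i+1} ≤ t} (φ(t^n_{i+1}) − φ(t^n_i))^{(q−2)/q} (x(t^n_{i+1}) − x(t^n_i))². If for some t ∈ [0,T] one has limsup_{n→∞} S^{(p)}_n(t) > 0, then for every q with 0 < q < p one has limsup_{n→∞} S^{(q)}_n(t) = +∞. -/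
open Filter Topology

/-- If the limsup of the scaled quadratic variation sums of index `p` at some
`t ∈ [0,T]` is strictly positive, then for every `0 < q < p` the limsup of the index-`q` sums
is `+∞`. -/
theorem scaled_qv_switch_limsup_top_of_limsup_pos
    (T : ℝ) (hT : 0 < T)
    (π : ℕ → ℕ → ℝ) (N : ℕ → ℕ)
    (hN : ∀ n, 0 < N n)
    (hπ0 : ∀ n, π n 0 = 0)
    (hπT : ∀ n, π n (N n) = T)
    (hπmono : ∀ n, ∀ i < N n, π n i < π n (i + 1))
    (hmesh : ∀ ε : ℝ, 0 < ε → ∀ᶠ n in atTop, ∀ i < N n, π n (i + 1) - π n i < ε)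
    (p : ℝ) (hp : 2 < p)
    (x : ℝ → ℝ) (hx : ContinuousOn x (Set.Icc 0 T))
    (φ : ℝ → ℝ)
    (hφcont : ContinuousOn φ (Set.Icc 0 T))
    (hφmono : MonotoneOn φ (Set.Icc 0 T))
    (hφ : ∀ t ∈ Set.Icc 0 T,
      Tendsto (fun n => ∑ i ∈ Finset.range (N n),
          if π n (i + 1) ≤ t then |x (π n (i + 1)) - x (π n i)| ^ p else 0)
        atTop (𝓝 (φ t)))
    (φ' : ℝ → ℝ) (c C : ℝ) (hc : 0 < c)
    (hderiv : ∀ t ∈ Set.Icc 0 T, HasDerivAt φ (φ' t) t)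
    (hφ'cont : ContinuousOn φ' (Set.Icc 0 T))
    (hφ'bd : ∀ t ∈ Set.Icc 0 T, c ≤ φ' t ∧ φ' t ≤ C)
    (t : ℝ) (ht : t ∈ Set.Icc 0 T)
    (hsup : (0 : EReal) < Filter.limsup (fun n => (((fun n => ∑ i ∈ Finset.range (N n),
        if π n (i + 1) ≤ t then
          (φ (π n (i + 1)) - φ (π n i)) ^ ((p - 2) / p)
            * (x (π n (i + 1)) - x (π n i)) ^ 2
        else 0) n : ℝ) : EReal)) atTop) :
    ∀ q : ℝ, 0 < q → q < p →
      Filter.limsup (fun n => (((fun n => ∑ i ∈ Finset.range (N n),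
        if π n (i + 1) ≤ t then
          (φ (π n (i + 1)) - φ (π n i)) ^ ((q - 2) / q)
            * (x (π n (i + 1)) - x (π n i)) ^ 2
        else 0) n : ℝ) : EReal)) atTop = ⊤ := by
  intro q hq hqp
  have hp0 : (0:ℝ) < p := by linarith
  have h0T : (0:ℝ) ∈ Set.Icc 0 T := ⟨le_refl 0, hT.le⟩
  have hC : 0 < C := lt_of_lt_of_le hc ((hφ'bd 0 h0T).1.trans (hφ'bd 0 h0T).2)
  have hrneg : 2/p - 2/q < 0 := by
    have h1 : 2/p < 2/q := div_lt_div_of_pos_left (by norm_num) hq hqp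
    linarith
  have hexp : (2/p - 2/q) + (p - 2)/p = (q - 2)/q := by
    field_simp
    ring
  -- monotonicity and membership of partition points
  have hmono : ∀ n, ∀ k, k ≤ N n → ∀ j ≤ k, π n j ≤ π n k := by
    intro n k
    induction k with
    | zero => intro _ j hj; interval_cases j; exact le_refl _
    | succ k ih =>
      intro hk j hj
      rcases Nat.eq_or_lt_of_le hj with h | h
      · rw [h]
      · exact le_trans (ih (le_of_lt hk) j (Nat.lt_succ_iff.mp h))
          (le_of_lt (hπmono n k hk))
  have hmem : ∀ n, ∀ i ≤ N n, π n i ∈ Set.Icc 0 T := by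
    intro n i hi
    constructor
    · have := hmono n i hi 0 (Nat.zero_le _); rwa [hπ0 n] at this
    · have := hmono n (N n) (le_refl _) i hi; rwa [hπT n] at this
  -- mean value bounds for increments of φ
  have hMVT : ∀ a b : ℝ, a ∈ Set.Icc 0 T → b ∈ Set.Icc 0 T → a < b →
      c * (b - a) ≤ φ b - φ a ∧ φ b - φ a ≤ C * (b - a) := by
    intro a b ha hb hab
    have hsub : Set.Icc a b ⊆ Set.Icc 0 T := Set.Icc_subset_Icc ha.1 hb.2
    obtain ⟨ξ, hξ, hξd⟩ := exists_hasDerivAt_eq_slope φ φ' hab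
      (hφcont.mono hsub)
      (fun y hy => hderiv y (hsub (Set.mem_Icc_of_Ioo hy)))
    have hξmem : ξ ∈ Set.Icc 0 T := hsub (Set.mem_Icc_of_Ioo hξ)
    have hb1 := (hφ'bd ξ hξmem).1
    have hb2 := (hφ'bd ξ hξmem).2
    have hba : (0:ℝ) < b - a := sub_pos.mpr hab
    have heq : φ b - φ a = φ' ξ * (b - a) := by
      rw [hξd]; field_simp
    constructor
    · rw [heq]; exact mul_le_mul_of_nonneg_right hb1 hba.le
    · rw [heq]; exact mul_le_mul_of_nonneg_right hb2 hba.le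
  -- extract a real level a with frequently a < S_p n
  obtain ⟨z, hz0, hzL⟩ := exists_between hsup
  lift z to ℝ using ⟨(lt_of_lt_of_le hzL le_top).ne, ne_bot_of_gt hz0⟩ with a
  have ha0 : (0:ℝ) < a := by exact_mod_cast hz0
  have hfreq : ∃ᶠ n in atTop, a < ∑ i ∈ Finset.range (N n),
      if π n (i + 1) ≤ t then
        (φ (π n (i + 1)) - φ (π n i)) ^ ((p - 2) / p)
          * (x (π n (i + 1)) - x (π n i)) ^ 2
      else 0 := by
    have h := Filter.frequently_lt_of_lt_limsup Filter.isCobounded_le_of_bot hzL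
    exact h.mono fun n hn => EReal.coe_lt_coe_iff.mp hn
  -- conclude
  rw [EReal.eq_top_iff_forall_lt]
  intro K
  set M : ℝ := (|K| + 1) / a with hMdef
  have hM0 : 0 < M := div_pos (by positivity) ha0
  set δ : ℝ := M ^ (1/(2/p - 2/q)) with hδdef
  have hδ0 : 0 < δ := Real.rpow_pos_of_pos hM0 _
  have hδr : δ ^ (2/p - 2/q) = M := by
    rw [hδdef, ← Real.rpow_mul hM0.le, one_div_mul_cancel hrneg.ne, Real.rpow_one]
  have hev : ∀ᶠ n in atTop, M * (∑ i ∈ Finset.range (N n),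
      if π n (i + 1) ≤ t then
        (φ (π n (i + 1)) - φ (π n i)) ^ ((p - 2) / p)
          * (x (π n (i + 1)) - x (π n i)) ^ 2
      else 0) ≤ ∑ i ∈ Finset.range (N n),
      if π n (i + 1) ≤ t then
        (φ (π n (i + 1)) - φ (π n i)) ^ ((q - 2) / q)
          * (x (π n (i + 1)) - x (π n i)) ^ 2
      else 0 := by
    filter_upwards [hmesh (δ / C) (div_pos hδ0 hC)] with n hn
    rw [Finset.mul_sum]
    apply Finset.sum_le_sum
    intro i hi
    have hiN : i < N n := Finset.mem_range.mp hi
    by_cases hcond : π n (i + 1) ≤ t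
    · simp only [hcond, if_true]
      have hu := hmem n i hiN.le
      have hv := hmem n (i + 1) hiN
      have huv : π n i < π n (i + 1) := hπmono n i hiN
      obtain ⟨hlow, hhigh⟩ := hMVT _ _ hu hv huv
      have hΔpos : 0 < φ (π n (i + 1)) - φ (π n i) :=
        lt_of_lt_of_le (by nlinarith [sub_pos.mpr huv]) hlow
      have hΔlt : φ (π n (i + 1)) - φ (π n i) ≤ δ := by
        have h1 : π n (i + 1) - π n i < δ / C := hn i hiN
        have h2 := mul_lt_mul_of_pos_left h1 hC
        rw [mul_div_cancel₀ _ hC.ne'] at h2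
        linarith
      have hM_le : M ≤ (φ (π n (i + 1)) - φ (π n i)) ^ (2/p - 2/q) := by
        rw [← hδr]
        exact Real.rpow_le_rpow_of_nonpos hΔpos hΔlt hrneg.le
      have hA0 : 0 ≤ (φ (π n (i + 1)) - φ (π n i)) ^ ((p-2)/p)
          * (x (π n (i + 1)) - x (π n i)) ^ 2 := by positivity
      calc M * ((φ (π n (i + 1)) - φ (π n i)) ^ ((p-2)/p)
              * (x (π n (i + 1)) - x (π n i)) ^ 2)
          ≤ (φ (π n (i + 1)) - φ (π n i)) ^ (2/p - 2/q)
              * ((φ (π n (i + 1)) - φ (π n i)) ^ ((p-2)/p)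
              * (x (π n (i + 1)) - x (π n i)) ^ 2) :=
            mul_le_mul_of_nonneg_right hM_le hA0
        _ = (φ (π n (i + 1)) - φ (π n i)) ^ ((q-2)/q)
              * (x (π n (i + 1)) - x (π n i)) ^ 2 := by
            rw [← mul_assoc, ← Real.rpow_add hΔpos, hexp]
    · simp [hcond]
  have hfreq2 : ∃ᶠ n in atTop, ((K + 1 : ℝ) : EReal) ≤ (((∑ i ∈ Finset.range (N n),
      if π n (i + 1) ≤ t then
        (φ (π n (i + 1)) - φ (π n i)) ^ ((q - 2) / q)
          * (x (π n (i + 1)) - x (π n i)) ^ 2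
      else 0 : ℝ)) : EReal) := by
    refine (hfreq.and_eventually hev).mono ?_
    rintro n ⟨h1, h2⟩
    have hSp0 : 0 ≤ ∑ i ∈ Finset.range (N n),
        if π n (i + 1) ≤ t then
          (φ (π n (i + 1)) - φ (π n i)) ^ ((p - 2) / p)
            * (x (π n (i + 1)) - x (π n i)) ^ 2
        else 0 := le_trans ha0.le h1.le
    have h3 : M * a ≤ M * ∑ i ∈ Finset.range (N n),
        if π n (i + 1) ≤ t then
          (φ (π n (i + 1)) - φ (π n i)) ^ ((p - 2) / p)
            * (x (π n (i + 1)) - x (π n i)) ^ 2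
        else 0 := mul_le_mul_of_nonneg_left h1.le hM0.le
    have hMa : M * a = |K| + 1 := by
      rw [hMdef, div_mul_cancel₀ _ ha0.ne']
    have h4 : K + 1 ≤ ∑ i ∈ Finset.range (N n),
        if π n (i + 1) ≤ t then
          (φ (π n (i + 1)) - φ (π n i)) ^ ((q - 2) / q)
            * (x (π n (i + 1)) - x (π n i)) ^ 2
        else 0 := by nlinarith [abs_nonneg K, le_abs_self K]
    exact_mod_cast h4
  have h5 : ((K + 1 : ℝ) : EReal) ≤ Filter.limsup (fun n => (((∑ i ∈ Finset.range (N n),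
      if π n (i + 1) ≤ t then
        (φ (π n (i + 1)) - φ (π n i)) ^ ((q - 2) / q)
          * (x (π n (i + 1)) - x (π n i)) ^ 2
      else 0 : ℝ)) : EReal)) atTop :=
    Filter.le_limsup_of_frequently_le hfreq2
  exact lt_of_lt_of_le (by exact_mod_cast lt_add_one K) h5
end

section
/- Let T > 0, let π = (π_n) be a sequence of partitions of [0,T] with mesh tending to 0, let p > 2, and let x : [0,T] → ℝ be continuous with finite p-th variation along π. Write φ(t) = [x]^(p)_π(t) and assume φ is continuously differentiable with 0 < c ≤ φ′ ≤ C < ∞ on [0,T]. For q > 0 set S^{(q)}_n(t) = Σ_{t^n_{i+1} ≤ t} (φ(t^n_{i+1}) − φ(t^n_i))^{(q−2)/q} (x(t^n_{i+1}) − x(t^n_i))². If for some t ∈ [0,T] one has liminf_{n→∞} S^{(p)}_n(t) > 0, then for every q with 0 < q < p one has liminf_{n→∞} S^{(q)}_n(t) = +∞. -/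
open Filter Topology

/-- If the liminf of the scaled quadratic variation sums of index `p` at some
`t ∈ [0,T]` is strictly positive, then for every `0 < q < p` the liminf of the index-`q` sums
is `+∞`. -/
theorem scaled_qv_switch_liminf_top_of_liminf_pos
    (T : ℝ) (hT : 0 < T)
    (π : ℕ → ℕ → ℝ) (N : ℕ → ℕ)
    (hN : ∀ n, 0 < N n)
    (hπ0 : ∀ n, π n 0 = 0)
    (hπT : ∀ n, π n (N n) = T)
    (hπmono : ∀ n, ∀ i < N n, π n i < π n (i + 1))
    (hmesh : ∀ ε : ℝ, 0 < ε → ∀ᶠ n in atTop, ∀ i < N n, π n (i + 1) - π n i < ε)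
    (p : ℝ) (hp : 2 < p)
    (x : ℝ → ℝ) (hx : ContinuousOn x (Set.Icc 0 T))
    (φ : ℝ → ℝ)
    (hφcont : ContinuousOn φ (Set.Icc 0 T))
    (hφmono : MonotoneOn φ (Set.Icc 0 T))
    (hφ : ∀ t ∈ Set.Icc 0 T,
      Tendsto (fun n => ∑ i ∈ Finset.range (N n),
          if π n (i + 1) ≤ t then |x (π n (i + 1)) - x (π n i)| ^ p else 0)
        atTop (𝓝 (φ t)))
    (φ' : ℝ → ℝ) (c C : ℝ) (hc : 0 < c)
    (hderiv : ∀ t ∈ Set.Icc 0 T, HasDerivAt φ (φ' t) t)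
    (hφ'cont : ContinuousOn φ' (Set.Icc 0 T))
    (hφ'bd : ∀ t ∈ Set.Icc 0 T, c ≤ φ' t ∧ φ' t ≤ C)
    (t : ℝ) (ht : t ∈ Set.Icc 0 T)
    (hinf : (0 : EReal) < Filter.liminf (fun n => (((fun n => ∑ i ∈ Finset.range (N n),
        if π n (i + 1) ≤ t then
          (φ (π n (i + 1)) - φ (π n i)) ^ ((p - 2) / p)
            * (x (π n (i + 1)) - x (π n i)) ^ 2
        else 0) n : ℝ) : EReal)) atTop) :
    ∀ q : ℝ, 0 < q → q < p →
      Filter.liminf (fun n => (((fun n => ∑ i ∈ Finset.range (N n),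
        if π n (i + 1) ≤ t then
          (φ (π n (i + 1)) - φ (π n i)) ^ ((q - 2) / q)
            * (x (π n (i + 1)) - x (π n i)) ^ 2
        else 0) n : ℝ) : EReal)) atTop = ⊤ := by
  intro q hq0 hqp
  have hp0 : (0:ℝ) < p := by linarith
  have hC : 0 < C := by
    obtain ⟨h1, h2⟩ := hφ'bd 0 ⟨le_rfl, hT.le⟩
    linarith
  have hδ : 2/p - 2/q < 0 := by
    have : 2/p < 2/q := div_lt_div_of_pos_left (by norm_num) hq0 hqp
    linarith
  set δ : ℝ := 2/p - 2/q with hδdef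
  have hδne : δ ≠ 0 := hδ.ne
  have hexp : (q-2)/q = (p-2)/p + δ := by
    rw [hδdef]
    field_simp
    ring
  -- partition points lie in [0,T]
  have hmono : ∀ n i j, i ≤ j → j ≤ N n → π n i ≤ π n j := by
    intro n i j hij hj
    induction j with
    | zero => simp only [Nat.le_zero] at hij; simp [hij]
    | succ k ih =>
      rcases Nat.lt_or_ge i (k+1) with h | h
      · exact le_trans (ih (Nat.lt_succ_iff.mp h) (le_trans (Nat.le_succ k) hj))
          (le_of_lt (hπmono n k (Nat.lt_of_succ_le hj)))
      · have : i = k+1 := le_antisymm hij h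
        simp [this]
  have hmem : ∀ n i, i ≤ N n → π n i ∈ Set.Icc (0:ℝ) T := by
    intro n i hi
    constructor
    · rw [← hπ0 n]; exact hmono n 0 i (Nat.zero_le i) hi
    · rw [← hπT n]; exact hmono n i (N n) hi le_rfl
  -- Lipschitz bound for φ
  have hφlip : ∀ s s', s ∈ Set.Icc (0:ℝ) T → s' ∈ Set.Icc (0:ℝ) T → s ≤ s' →
      φ s' - φ s ≤ C * (s' - s) := by
    intro s s' hs hs' hss
    have hlip := Convex.norm_image_sub_le_of_norm_hasDerivWithin_le
      (f := φ) (f' := φ') (s := Set.Icc (0:ℝ) T) (C := C)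
      (fun y hy => (hderiv y hy).hasDerivWithinAt)
      (fun y hy => by
        rw [Real.norm_eq_abs, abs_le]
        obtain ⟨h1, h2⟩ := hφ'bd y hy
        constructor <;> linarith)
      (convex_Icc 0 T) hs hs'
    rw [Real.norm_eq_abs, Real.norm_eq_abs, abs_of_nonneg (sub_nonneg.mpr hss)] at hlip
    exact le_trans (le_abs_self _) hlip
  -- extract a positive real lower bound on the liminf of the p-sums
  obtain ⟨a, ha0, haLT⟩ := EReal.lt_iff_exists_real_btwn.mp hinf
  have ha0' : (0:ℝ) < a := by exact_mod_cast ha0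
  have hev_a : ∀ᶠ n in atTop, a < ∑ i ∈ Finset.range (N n),
      if π n (i + 1) ≤ t then
        (φ (π n (i + 1)) - φ (π n i)) ^ ((p - 2) / p) * (x (π n (i + 1)) - x (π n i)) ^ 2
      else 0 := by
    have := Filter.eventually_lt_of_lt_liminf haLT
    filter_upwards [this] with n hn
    exact_mod_cast hn
  refine Tendsto.liminf_eq ?_
  rw [EReal.tendsto_nhds_top_iff_real]
  intro M
  set M' : ℝ := max M 0 + 1 with hM'def
  have hM'pos : 0 < M' := by positivity
  have hMM' : M < M' := lt_of_le_of_lt (le_max_left M 0) (by linarith)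
  set ε : ℝ := (M'/a) ^ (1/δ) / C with hεdef
  have hε0 : 0 < ε := by positivity
  have hCε : C * ε = (M'/a) ^ (1/δ) := by
    rw [hεdef]; field_simp
  have hCε0 : 0 < C * ε := by positivity
  have hCεδ : (C * ε) ^ δ = M'/a := by
    rw [hCε, ← Real.rpow_mul (by positivity), one_div_mul_cancel hδne, Real.rpow_one]
  filter_upwards [hmesh ε hε0, hev_a] with n hmeshn han
  rw [EReal.coe_lt_coe_iff]
  -- core inequality: (C ε)^δ * S_p ≤ S_q
  have key : (C*ε)^δ * (∑ i ∈ Finset.range (N n),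
      if π n (i + 1) ≤ t then
        (φ (π n (i + 1)) - φ (π n i)) ^ ((p - 2) / p) * (x (π n (i + 1)) - x (π n i)) ^ 2
      else 0) ≤ ∑ i ∈ Finset.range (N n),
      if π n (i + 1) ≤ t then
        (φ (π n (i + 1)) - φ (π n i)) ^ ((q - 2) / q) * (x (π n (i + 1)) - x (π n i)) ^ 2
      else 0 := by
    rw [Finset.mul_sum]
    apply Finset.sum_le_sum
    intro i hi
    have hiN : i < N n := Finset.mem_range.mp hi
    by_cases hit : π n (i+1) ≤ t
    · simp only [if_pos hit]
      have hd0 : 0 ≤ φ (π n (i+1)) - φ (π n i) :=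
        sub_nonneg.mpr (hφmono (hmem n i hiN.le) (hmem n (i+1) hiN) (le_of_lt (hπmono n i hiN)))
      rcases eq_or_lt_of_le hd0 with h0 | hdpos
      · rw [← h0, Real.zero_rpow (div_pos (by linarith) hp0).ne']
        have : (0:ℝ) ^ ((q-2)/q) * (x (π n (i + 1)) - x (π n i)) ^ 2 ≥ 0 := by positivity
        nlinarith
      · have hdle : φ (π n (i+1)) - φ (π n i) ≤ C * ε := by
          have h1 := hφlip (π n i) (π n (i+1)) (hmem n i hiN.le) (hmem n (i+1) hiN)
            (le_of_lt (hπmono n i hiN))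
          have h2 := hmeshn i hiN
          nlinarith
        have h1 : (C*ε)^δ ≤ (φ (π n (i+1)) - φ (π n i))^δ :=
          Real.rpow_le_rpow_of_nonpos hdpos hdle hδ.le
        calc (C*ε)^δ * ((φ (π n (i+1)) - φ (π n i)) ^ ((p-2)/p) * (x (π n (i + 1)) - x (π n i)) ^ 2)
            ≤ (φ (π n (i+1)) - φ (π n i))^δ *
              ((φ (π n (i+1)) - φ (π n i)) ^ ((p-2)/p) * (x (π n (i + 1)) - x (π n i)) ^ 2) :=
              mul_le_mul_of_nonneg_right h1 (by positivity)
          _ = (φ (π n (i+1)) - φ (π n i)) ^ ((q-2)/q) * (x (π n (i + 1)) - x (π n i)) ^ 2 := by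
              rw [hexp, Real.rpow_add hdpos]; ring
    · simp [hit]
  have h2 : (C*ε)^δ * a ≤ (C*ε)^δ * (∑ i ∈ Finset.range (N n),
      if π n (i + 1) ≤ t then
        (φ (π n (i + 1)) - φ (π n i)) ^ ((p - 2) / p) * (x (π n (i + 1)) - x (π n i)) ^ 2
      else 0) :=
    mul_le_mul_of_nonneg_left han.le (by positivity)
  have h3 : (C*ε)^δ * a = M' := by
    rw [hCεδ, div_mul_cancel₀ _ ha0'.ne']
  linarith [le_trans h2 key]
end

section
/- Let T > 0, let π = (π_n) be a sequence of partitions of [0,T] with mesh tending to 0, let p > 1, and let x : [0,T] → ℝ be continuous with finite p-th variation [x]^(p)_π along π. Let A : [0,T] → ℝ be continuous with vanishing p-th variation along π, i.e. for every t ∈ [0,T], Σ_{t^n_i ≤ t} |A(t^n_{i+1}) − A(t^n_i)|^p → 0 as n → ∞. Then x + A has finite p-th variation along π and [x + A]^(p)_π(t) = [x]^(p)_π(t) for every t ∈ [0,T]. -/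
open Filter Topology

lemma pvar_aux_sum_eq (n : ℕ) (t : ℝ) (Nn : ℕ) (r : ℕ → ℝ) (f : ℝ → ℝ) (p : ℝ) (hp : p ≠ 0) :
    ∑ i ∈ Finset.range Nn, (if r (i + 1) ≤ t then |f (r (i + 1)) - f (r i)| ^ p else 0)
      = ∑ i ∈ Finset.range Nn, |(if r (i + 1) ≤ t then f (r (i + 1)) - f (r i) else 0)| ^ p := by
  refine Finset.sum_congr rfl fun i _ => ?_
  split_ifs with h
  · rfl
  · simp [Real.zero_rpow hp]

/-- If `x` has finite `p`-th variation `φ` along `π` (`p > 1`) and `A` is a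
continuous function whose `p`-th variation sums along `π` vanish in the limit, then `x + A` has
finite `p`-th variation along `π` and `[x + A]^(p)_π = [x]^(p)_π`. -/
theorem pvar_add_zero_pvar
    (T : ℝ) (hT : 0 < T)
    (π : ℕ → ℕ → ℝ) (N : ℕ → ℕ)
    (hN : ∀ n, 0 < N n)
    (hπ0 : ∀ n, π n 0 = 0)
    (hπT : ∀ n, π n (N n) = T)
    (hπmono : ∀ n, ∀ i < N n, π n i < π n (i + 1))
    (hmesh : ∀ ε : ℝ, 0 < ε → ∀ᶠ n in atTop, ∀ i < N n, π n (i + 1) - π n i < ε)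
    (p : ℝ) (hp : 1 < p)
    (x : ℝ → ℝ) (hx : ContinuousOn x (Set.Icc 0 T))
    (φ : ℝ → ℝ)
    (hφcont : ContinuousOn φ (Set.Icc 0 T))
    (hφmono : MonotoneOn φ (Set.Icc 0 T))
    (hφ : ∀ t ∈ Set.Icc 0 T,
      Tendsto (fun n => ∑ i ∈ Finset.range (N n),
          if π n (i + 1) ≤ t then |x (π n (i + 1)) - x (π n i)| ^ p else 0)
        atTop (𝓝 (φ t)))
    (A : ℝ → ℝ) (hA : ContinuousOn A (Set.Icc 0 T))
    (hApvar : ∀ t ∈ Set.Icc 0 T,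
      Tendsto (fun n => ∑ i ∈ Finset.range (N n),
          if π n (i + 1) ≤ t then |A (π n (i + 1)) - A (π n i)| ^ p else 0)
        atTop (𝓝 0)) :
    ∀ t ∈ Set.Icc 0 T,
      Tendsto (fun n => ∑ i ∈ Finset.range (N n),
          if π n (i + 1) ≤ t then
            |(x (π n (i + 1)) + A (π n (i + 1))) - (x (π n i) + A (π n i))| ^ p
          else 0)
        atTop (𝓝 (φ t)) := by
  intro t ht
  have hp0 : (0:ℝ) < p := lt_trans one_pos hp
  have hpne : p ≠ 0 := ne_of_gt hp0
  have hip : (0:ℝ) < 1 / p := by positivity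
  -- increments with indicator
  set f : ℕ → ℕ → ℝ := fun n i => if π n (i + 1) ≤ t then x (π n (i + 1)) - x (π n i) else 0
    with hf
  set g : ℕ → ℕ → ℝ := fun n i => if π n (i + 1) ≤ t then A (π n (i + 1)) - A (π n i) else 0
    with hg
  set S : ℕ → ℝ := fun n => ∑ i ∈ Finset.range (N n), |f n i| ^ p with hS
  set B : ℕ → ℝ := fun n => ∑ i ∈ Finset.range (N n), |g n i| ^ p with hB
  set C : ℕ → ℝ := fun n => ∑ i ∈ Finset.range (N n), |f n i + g n i| ^ p with hC
  have hSnn : ∀ n, 0 ≤ S n := fun n =>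
    Finset.sum_nonneg fun i _ => Real.rpow_nonneg (abs_nonneg _) _
  have hBnn : ∀ n, 0 ≤ B n := fun n =>
    Finset.sum_nonneg fun i _ => Real.rpow_nonneg (abs_nonneg _) _
  have hCnn : ∀ n, 0 ≤ C n := fun n =>
    Finset.sum_nonneg fun i _ => Real.rpow_nonneg (abs_nonneg _) _
  have hStend : Tendsto S atTop (𝓝 (φ t)) := by
    have := hφ t ht
    convert this using 2 with n
    exact (pvar_aux_sum_eq n t (N n) (π n) x p hpne).symm
  have hBtend : Tendsto B atTop (𝓝 0) := by
    have := hApvar t ht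
    convert this using 2 with n
    exact (pvar_aux_sum_eq n t (N n) (π n) A p hpne).symm
  have hφnn : 0 ≤ φ t := le_of_tendsto_of_tendsto' tendsto_const_nhds hStend hSnn
  -- Minkowski both ways
  have hmink1 : ∀ n, C n ^ (1/p) ≤ S n ^ (1/p) + B n ^ (1/p) := fun n =>
    Real.Lp_add_le _ _ _ hp.le
  have hmink2 : ∀ n, S n ^ (1/p) ≤ C n ^ (1/p) + B n ^ (1/p) := by
    intro n
    have : S n = ∑ i ∈ Finset.range (N n), |(f n i + g n i) + (-g n i)| ^ p := by
      refine Finset.sum_congr rfl fun i _ => ?_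
      ring_nf
    rw [this]
    have h := Real.Lp_add_le (Finset.range (N n)) (fun i => f n i + g n i)
      (fun i => -g n i) hp.le
    simpa [abs_neg] using h
  -- squeeze: |C^{1/p} - S^{1/p}| ≤ B^{1/p} → 0
  have hBr : Tendsto (fun n => B n ^ (1/p)) atTop (𝓝 0) := by
    have := hBtend.rpow_const (p := 1/p) (Or.inr hip.le)
    rwa [Real.zero_rpow (by positivity : (1:ℝ)/p ≠ 0)] at this
  have hSr : Tendsto (fun n => S n ^ (1/p)) atTop (𝓝 (φ t ^ (1/p))) :=
    hStend.rpow_const (Or.inr hip.le)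
  have hdiff : Tendsto (fun n => C n ^ (1/p) - S n ^ (1/p)) atTop (𝓝 0) := by
    rw [tendsto_zero_iff_abs_tendsto_zero]
    apply squeeze_zero (fun n => abs_nonneg _) _ hBr
    intro n
    rw [abs_sub_le_iff]
    constructor
    · linarith [hmink1 n]
    · linarith [hmink2 n]
  have hCr : Tendsto (fun n => C n ^ (1/p)) atTop (𝓝 (φ t ^ (1/p))) := by
    have := hSr.add hdiff
    simpa using this.congr fun n => by ring
  have hCtend : Tendsto C atTop (𝓝 (φ t)) := by
    have := hCr.rpow_const (p := p) (Or.inr hp0.le)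
    have heq : ∀ n, (C n ^ (1/p)) ^ p = C n := fun n => by
      rw [← Real.rpow_mul (hCnn n), one_div_mul_cancel hpne, Real.rpow_one]
    have heq2 : (φ t ^ (1/p)) ^ p = φ t := by
      rw [← Real.rpow_mul hφnn, one_div_mul_cancel hpne, Real.rpow_one]
    rw [heq2] at this
    exact this.congr heq
  -- rewrite goal
  have goal_eq : ∀ n, (∑ i ∈ Finset.range (N n),
      if π n (i + 1) ≤ t then
        |(x (π n (i + 1)) + A (π n (i + 1))) - (x (π n i) + A (π n i))| ^ p
      else 0) = C n := by
    intro n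
    rw [hC, pvar_aux_sum_eq n t (N n) (π n) (fun s => x s + A s) p hpne]
    refine Finset.sum_congr rfl fun i _ => ?_
    congr 1
    split_ifs with h <;> simp [hf, hg, h] <;> ring
  exact hCtend.congr fun n => (goal_eq n).symm
end

section
/- Let T > 0, let π = (π_n) be a sequence of partitions of [0,T] with mesh tending to 0, let p > 2 and γ = (p−2)/p, and let x : [0,T] → ℝ be continuous with finite p-th variation [x]^(p)_π along π and with finite scaled quadratic variation ⟨x⟩^(p)_π along π. Let A : [0,T] → ℝ be continuous with Σ_{t^n_i ≤ t} |A(t^n_{i+1}) − A(t^n_i)|^p → 0 for every t ∈ [0,T]. Then x + A has finite scaled quadratic variation along π and ⟨x + A⟩^(p)_π(t) = ⟨x⟩^(p)_π(t) for every t ∈ [0,T]; that is, the sums Σ_{t^n_{i+1} ≤ t} ([x+A]^(p)_π(t^n_{i+1}) − [x+A]^(p)_π(t^n_i))^γ ((x+A)(t^n_{i+1}) − (x+A)(t^n_i))² converge to ⟨x⟩^(p)_π(t). -/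
open Filter Topology

lemma aux_cs_bound (s : Finset ℕ) (w a b : ℕ → ℝ) (hw : ∀ i ∈ s, 0 ≤ w i) :
    |(∑ i ∈ s, w i * (a i + b i) ^ 2) - ∑ i ∈ s, w i * (a i) ^ 2| ≤
      2 * Real.sqrt ((∑ i ∈ s, w i * (a i) ^ 2) * (∑ i ∈ s, w i * (b i) ^ 2))
        + ∑ i ∈ s, w i * (b i) ^ 2 := by
  set X : ℝ := ∑ i ∈ s, w i * (|a i| * |b i|) with hX
  have hXnn : 0 ≤ X :=
    Finset.sum_nonneg fun i hi => mul_nonneg (hw i hi)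
      (mul_nonneg (abs_nonneg _) (abs_nonneg _))
  have hCS : X ^ 2 ≤ (∑ i ∈ s, w i * (a i) ^ 2) * (∑ i ∈ s, w i * (b i) ^ 2) := by
    have h := Finset.sum_mul_sq_le_sq_mul_sq s
      (fun i => Real.sqrt (w i) * |a i|) (fun i => Real.sqrt (w i) * |b i|)
    have e1 : ∑ i ∈ s, (Real.sqrt (w i) * |a i|) * (Real.sqrt (w i) * |b i|) = X :=
      Finset.sum_congr rfl fun i hi => by
        rw [show (Real.sqrt (w i) * |a i|) * (Real.sqrt (w i) * |b i|)
            = (Real.sqrt (w i) * Real.sqrt (w i)) * (|a i| * |b i|) by ring,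
          Real.mul_self_sqrt (hw i hi)]
    have e2 : ∑ i ∈ s, (Real.sqrt (w i) * |a i|) ^ 2 = ∑ i ∈ s, w i * (a i) ^ 2 :=
      Finset.sum_congr rfl fun i hi => by
        rw [mul_pow, Real.sq_sqrt (hw i hi), sq_abs]
    have e3 : ∑ i ∈ s, (Real.sqrt (w i) * |b i|) ^ 2 = ∑ i ∈ s, w i * (b i) ^ 2 :=
      Finset.sum_congr rfl fun i hi => by
        rw [mul_pow, Real.sq_sqrt (hw i hi), sq_abs]
    rwa [e1, e2, e3] at h
  have hXle : X ≤ Real.sqrt ((∑ i ∈ s, w i * (a i) ^ 2) * (∑ i ∈ s, w i * (b i) ^ 2)) := by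
    have h := Real.sqrt_le_sqrt hCS
    rwa [Real.sqrt_sq hXnn] at h
  have hdiff : (∑ i ∈ s, w i * (a i + b i) ^ 2) - ∑ i ∈ s, w i * (a i) ^ 2
      = ∑ i ∈ s, w i * (2 * a i * b i + (b i) ^ 2) := by
    rw [← Finset.sum_sub_distrib]
    exact Finset.sum_congr rfl fun i _ => by ring
  calc |(∑ i ∈ s, w i * (a i + b i) ^ 2) - ∑ i ∈ s, w i * (a i) ^ 2|
      = |∑ i ∈ s, w i * (2 * a i * b i + (b i) ^ 2)| := by rw [hdiff]
    _ ≤ ∑ i ∈ s, |w i * (2 * a i * b i + (b i) ^ 2)| := Finset.abs_sum_le_sum_abs _ _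
    _ ≤ ∑ i ∈ s, (2 * (w i * (|a i| * |b i|)) + w i * (b i) ^ 2) := by
        refine Finset.sum_le_sum fun i hi => ?_
        rw [abs_mul, abs_of_nonneg (hw i hi)]
        have h1 : |2 * a i * b i + (b i) ^ 2| ≤ 2 * (|a i| * |b i|) + (b i) ^ 2 := by
          calc |2 * a i * b i + (b i) ^ 2| ≤ |2 * a i * b i| + |(b i) ^ 2| := abs_add_le _ _
            _ = 2 * (|a i| * |b i|) + (b i) ^ 2 := by
                rw [abs_mul, abs_mul, abs_two, abs_of_nonneg (sq_nonneg (b i))]; ring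
        calc w i * |2 * a i * b i + (b i) ^ 2|
            ≤ w i * (2 * (|a i| * |b i|) + (b i) ^ 2) :=
              mul_le_mul_of_nonneg_left h1 (hw i hi)
          _ = 2 * (w i * (|a i| * |b i|)) + w i * (b i) ^ 2 := by ring
    _ = 2 * X + ∑ i ∈ s, w i * (b i) ^ 2 := by
        rw [Finset.sum_add_distrib, ← Finset.mul_sum]
    _ ≤ _ := by linarith

lemma aux_holder (s : Finset ℕ) {p : ℝ} (hp : 2 < p) (d e : ℕ → ℝ)
    (hd : ∀ i ∈ s, 0 ≤ d i) :
    ∑ i ∈ s, (d i) ^ ((p - 2) / p) * (e i) ^ 2 ≤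
      (∑ i ∈ s, d i) ^ ((p - 2) / p) * (∑ i ∈ s, |e i| ^ p) ^ (2 / p) := by
  have hp0 : (0 : ℝ) < p := by linarith
  have hp2 : (0 : ℝ) < p - 2 := by linarith
  have hconj : Real.HolderConjugate (p / (p - 2)) (p / 2) := by
    rw [Real.holderConjugate_iff]
    constructor
    · exact (one_lt_div hp2).mpr (by linarith)
    · rw [inv_div, inv_div, ← add_div]
      field_simp
      ring
  have h := Real.inner_le_Lp_mul_Lq_of_nonneg (s := s) hconj
    (f := fun i => (d i) ^ ((p - 2) / p)) (g := fun i => (e i) ^ 2)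
    (fun i hi => Real.rpow_nonneg (hd i hi) _) (fun i _ => sq_nonneg _)
  have e1 : ∑ i ∈ s, ((d i) ^ ((p - 2) / p)) ^ (p / (p - 2)) = ∑ i ∈ s, d i :=
    Finset.sum_congr rfl fun i hi => by
      rw [← Real.rpow_mul (hd i hi), show (p - 2) / p * (p / (p - 2)) = 1 by
        field_simp, Real.rpow_one]
  have e2 : ∑ i ∈ s, ((e i) ^ 2 : ℝ) ^ (p / 2) = ∑ i ∈ s, |e i| ^ p :=
    Finset.sum_congr rfl fun i _ => by
      rw [← sq_abs (e i), ← Real.rpow_natCast |e i| 2, ← Real.rpow_mul (abs_nonneg _),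
        show ((2 : ℕ) : ℝ) * (p / 2) = p by push_cast; ring]
  have e3 : 1 / (p / (p - 2)) = (p - 2) / p := one_div_div _ _
  have e4 : 1 / (p / 2) = 2 / p := one_div_div _ _
  rw [e1, e2, e3, e4] at h
  exact h

/-- If `x` has finite `p`-th variation `φ` and finite scaled quadratic
variation `ψ` along `π` (`p > 2`, `γ = (p-2)/p`), and `A` is a continuous function whose
`p`-th variation sums along `π` vanish, then `x + A` has finite `p`-th variation equal to `φ`,
and `x + A` has finite scaled quadratic variation along `π` equal to `ψ = ⟨x⟩^(p)_π`: the
scaled quadratic variation sums of `x + A` (with weights given by the increments of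
`[x+A]^(p)_π = φ`) converge to `ψ t` for every `t ∈ [0,T]`. -/
theorem scaled_qv_add_zero_pvar
    (T : ℝ) (hT : 0 < T)
    (π : ℕ → ℕ → ℝ) (N : ℕ → ℕ)
    (hN : ∀ n, 0 < N n)
    (hπ0 : ∀ n, π n 0 = 0)
    (hπT : ∀ n, π n (N n) = T)
    (hπmono : ∀ n, ∀ i < N n, π n i < π n (i + 1))
    (hmesh : ∀ ε : ℝ, 0 < ε → ∀ᶠ n in atTop, ∀ i < N n, π n (i + 1) - π n i < ε)
    (p : ℝ) (hp : 2 < p)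
    (x : ℝ → ℝ) (hx : ContinuousOn x (Set.Icc 0 T))
    (φ : ℝ → ℝ)
    (hφcont : ContinuousOn φ (Set.Icc 0 T))
    (hφmono : MonotoneOn φ (Set.Icc 0 T))
    (hφ : ∀ t ∈ Set.Icc 0 T,
      Tendsto (fun n => ∑ i ∈ Finset.range (N n),
          if π n (i + 1) ≤ t then |x (π n (i + 1)) - x (π n i)| ^ p else 0)
        atTop (𝓝 (φ t)))
    (ψ : ℝ → ℝ)
    (hψcont : ContinuousOn ψ (Set.Icc 0 T))
    (hψ : ∀ t ∈ Set.Icc 0 T,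
      Tendsto (fun n => ∑ i ∈ Finset.range (N n),
          if π n (i + 1) ≤ t then
            (φ (π n (i + 1)) - φ (π n i)) ^ ((p - 2) / p)
              * (x (π n (i + 1)) - x (π n i)) ^ 2
          else 0)
        atTop (𝓝 (ψ t)))
    (A : ℝ → ℝ) (hA : ContinuousOn A (Set.Icc 0 T))
    (hApvar : ∀ t ∈ Set.Icc 0 T,
      Tendsto (fun n => ∑ i ∈ Finset.range (N n),
          if π n (i + 1) ≤ t then |A (π n (i + 1)) - A (π n i)| ^ p else 0)
        atTop (𝓝 0)) :
    (∀ t ∈ Set.Icc 0 T,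
      Tendsto (fun n => ∑ i ∈ Finset.range (N n),
          if π n (i + 1) ≤ t then
            |(x (π n (i + 1)) + A (π n (i + 1))) - (x (π n i) + A (π n i))| ^ p
          else 0)
        atTop (𝓝 (φ t)))
    ∧
    (∀ t ∈ Set.Icc 0 T,
      Tendsto (fun n => ∑ i ∈ Finset.range (N n),
          if π n (i + 1) ≤ t then
            (φ (π n (i + 1)) - φ (π n i)) ^ ((p - 2) / p)
              * ((x (π n (i + 1)) + A (π n (i + 1))) - (x (π n i) + A (π n i))) ^ 2
          else 0)
        atTop (𝓝 (ψ t))) := by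
    classical
  have hp0 : (0 : ℝ) < p := by linarith
  have hp1 : (1 : ℝ) ≤ p := by linarith
  -- monotonicity of the partition points
  have hmono : ∀ n i j, j ≤ N n → i ≤ j → π n i ≤ π n j := by
    intro n i j
    induction j with
    | zero => intro _ hi; rw [Nat.le_zero.mp hi]
    | succ k ih =>
      intro hk hi
      by_cases h : i = k + 1
      · rw [h]
      · exact (ih (by omega) (by omega)).trans (hπmono n k (by omega)).le
  have hmem : ∀ n i, i ≤ N n → π n i ∈ Set.Icc (0 : ℝ) T := by
    intro n i hi
    constructor
    · have h := hmono n 0 i hi (Nat.zero_le i); rwa [hπ0 n] at h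
    · have h := hmono n i (N n) le_rfl hi; rwa [hπT n] at h
  have hΔφ : ∀ n i, i < N n → 0 ≤ φ (π n (i + 1)) - φ (π n i) := by
    intro n i hi
    have h := hφmono (hmem n i hi.le) (hmem n (i + 1) hi) (hπmono n i hi).le
    linarith
  refine ⟨fun t ht => ?_, fun t ht => ?_⟩
  · -- Part 1: p-th variation of x + A
    set s : ℕ → Finset ℕ :=
      fun n => (Finset.range (N n)).filter (fun i => π n (i + 1) ≤ t) with hs
    set a : ℕ → ℕ → ℝ := fun n i => x (π n (i + 1)) - x (π n i) with ha
    set b : ℕ → ℕ → ℝ := fun n i => A (π n (i + 1)) - A (π n i) with hb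
    set u : ℕ → ℝ := fun n => ∑ i ∈ s n, |a n i| ^ p with hu
    set v : ℕ → ℝ := fun n => ∑ i ∈ s n, |b n i| ^ p with hv
    set w : ℕ → ℝ := fun n => ∑ i ∈ s n, |a n i + b n i| ^ p with hw
    have hwnn : ∀ n, 0 ≤ w n := fun n =>
      Finset.sum_nonneg fun i _ => Real.rpow_nonneg (abs_nonneg _) _
    have hunn : ∀ n, 0 ≤ u n := fun n =>
      Finset.sum_nonneg fun i _ => Real.rpow_nonneg (abs_nonneg _) _
    have hul : Tendsto u atTop (𝓝 (φ t)) :=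
      (hφ t ht).congr fun n => (Finset.sum_filter _ _).symm
    have hvl : Tendsto v atTop (𝓝 0) :=
      (hApvar t ht).congr fun n => (Finset.sum_filter _ _).symm
    have hφt0 : 0 ≤ φ t := ge_of_tendsto' hul hunn
    have hcu : Tendsto (fun n => u n ^ (1 / p)) atTop (𝓝 (φ t ^ (1 / p))) :=
      ((Real.continuousAt_rpow_const _ _ (Or.inr (one_div_nonneg.mpr hp0.le))).tendsto).comp hul
    have hcv : Tendsto (fun n => v n ^ (1 / p)) atTop (𝓝 0) := by
      have h0 := ((Real.continuousAt_rpow_const 0 (1 / p)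
        (Or.inr (one_div_nonneg.mpr hp0.le))).tendsto).comp hvl
      rw [show ((0 : ℝ) ^ ((1 : ℝ) / p)) = 0 from Real.zero_rpow (one_div_ne_zero hp0.ne')] at h0
      exact h0
    have hup : ∀ n, w n ^ (1 / p) ≤ u n ^ (1 / p) + v n ^ (1 / p) := fun n =>
      Real.Lp_add_le (s n) (a n) (b n) hp1
    have hlo : ∀ n, u n ^ (1 / p) ≤ w n ^ (1 / p) + v n ^ (1 / p) := by
      intro n
      have h := Real.Lp_add_le (s n) (fun i => a n i + b n i) (fun i => -(b n i)) hp1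
      simpa [add_neg_cancel_right] using h
    have hwroot : Tendsto (fun n => w n ^ (1 / p)) atTop (𝓝 (φ t ^ (1 / p))) := by
      refine tendsto_of_tendsto_of_tendsto_of_le_of_le
        (g := fun n => u n ^ (1 / p) - v n ^ (1 / p))
        (h := fun n => u n ^ (1 / p) + v n ^ (1 / p))
        ?_ ?_ (fun n => by have h := hlo n; linarith) (fun n => hup n)
      · simpa using hcu.sub hcv
      · simpa using hcu.add hcv
    have hwp : Tendsto w atTop (𝓝 (φ t)) := by
      have h1 := ((Real.continuousAt_rpow_const (φ t ^ (1 / p)) p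
        (Or.inr hp0.le)).tendsto).comp hwroot
      have e2 : ((φ t ^ (1 / p) : ℝ)) ^ p = φ t := by
        rw [← Real.rpow_mul hφt0, one_div_mul_cancel hp0.ne', Real.rpow_one]
      rw [show ((fun y : ℝ => y ^ p) ∘ fun n => w n ^ (1 / p))
          = fun n => (w n ^ (1 / p)) ^ p from rfl, e2] at h1
      exact h1.congr fun n => by
        rw [← Real.rpow_mul (hwnn n), one_div_mul_cancel hp0.ne', Real.rpow_one]
    refine hwp.congr fun n => ?_
    rw [hw, ← Finset.sum_filter]
    exact Finset.sum_congr rfl fun i _ => by rw [ha, hb]; ring_nf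
  · -- Part 2: scaled quadratic variation of x + A
    set s : ℕ → Finset ℕ :=
      fun n => (Finset.range (N n)).filter (fun i => π n (i + 1) ≤ t) with hs
    have hmems : ∀ n i, i ∈ s n → i < N n := fun n i hi =>
      Finset.mem_range.mp (Finset.mem_filter.mp hi).1
    set a : ℕ → ℕ → ℝ := fun n i => x (π n (i + 1)) - x (π n i) with ha
    set b : ℕ → ℕ → ℝ := fun n i => A (π n (i + 1)) - A (π n i) with hb
    set c : ℕ → ℕ → ℝ :=
      fun n i => (φ (π n (i + 1)) - φ (π n i)) ^ ((p - 2) / p) with hc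
    have hcn : ∀ n i, i ∈ s n → 0 ≤ c n i := fun n i hi =>
      Real.rpow_nonneg (hΔφ n i (hmems n i hi)) _
    set G : ℕ → ℝ := fun n => ∑ i ∈ s n, c n i * (a n i) ^ 2 with hG
    set R : ℕ → ℝ := fun n => ∑ i ∈ s n, c n i * (b n i) ^ 2 with hR
    set V : ℕ → ℝ := fun n => ∑ i ∈ s n, |b n i| ^ p with hV
    set F : ℕ → ℝ := fun n => ∑ i ∈ s n, c n i * (a n i + b n i) ^ 2 with hF
    have hGl : Tendsto G atTop (𝓝 (ψ t)) :=
      (hψ t ht).congr fun n => (Finset.sum_filter _ _).symm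
    have hVl : Tendsto V atTop (𝓝 0) :=
      (hApvar t ht).congr fun n => (Finset.sum_filter _ _).symm
    have hVnn : ∀ n, 0 ≤ V n := fun n =>
      Finset.sum_nonneg fun i _ => Real.rpow_nonneg (abs_nonneg _) _
    have hRnn : ∀ n, 0 ≤ R n := fun n =>
      Finset.sum_nonneg fun i hi => mul_nonneg (hcn n i hi) (sq_nonneg _)
    -- Hölder bound on R
    have hRb : ∀ n, R n ≤ (φ T - φ 0) ^ ((p - 2) / p) * V n ^ (2 / p) := by
      intro n
      have h := aux_holder (s n) hp (fun i => φ (π n (i + 1)) - φ (π n i)) (b n)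
        (fun i hi => hΔφ n i (hmems n i hi))
      refine le_trans h ?_
      refine mul_le_mul_of_nonneg_right ?_ (Real.rpow_nonneg (hVnn n) _)
      refine Real.rpow_le_rpow
        (Finset.sum_nonneg fun i hi => hΔφ n i (hmems n i hi)) ?_ (div_nonneg (by linarith) hp0.le)
      calc ∑ i ∈ s n, (φ (π n (i + 1)) - φ (π n i))
          ≤ ∑ i ∈ Finset.range (N n), (φ (π n (i + 1)) - φ (π n i)) :=
            Finset.sum_le_sum_of_subset_of_nonneg (Finset.filter_subset _ _)
              (fun i hi _ => hΔφ n i (Finset.mem_range.mp hi))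
        _ = φ T - φ 0 := by
            rw [Finset.sum_range_sub (fun i => φ (π n i)) (N n), hπT, hπ0]
    have hRz : Tendsto R atTop (𝓝 0) := by
      have hVp : Tendsto (fun n => V n ^ (2 / p)) atTop (𝓝 0) := by
        have h0 := ((Real.continuousAt_rpow_const 0 (2 / p)
          (Or.inr (div_nonneg (by norm_num) hp0.le))).tendsto).comp hVl
        rw [show ((0 : ℝ) ^ ((2 : ℝ) / p)) = 0 from
          Real.zero_rpow (div_ne_zero two_ne_zero hp0.ne')] at h0
        exact h0
      have hB : Tendsto (fun n => (φ T - φ 0) ^ ((p - 2) / p) * V n ^ (2 / p))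
          atTop (𝓝 0) := by
        simpa using hVp.const_mul ((φ T - φ 0) ^ ((p - 2) / p))
      exact squeeze_zero hRnn hRb hB
    -- bound |F - G|
    have hFG : ∀ n, |F n - G n| ≤ 2 * Real.sqrt (G n * R n) + R n := fun n =>
      aux_cs_bound (s n) (c n) (a n) (b n) (hcn n)
    have hBz : Tendsto (fun n => 2 * Real.sqrt (G n * R n) + R n) atTop (𝓝 0) := by
      have h1 : Tendsto (fun n => G n * R n) atTop (𝓝 0) := by
        simpa using hGl.mul hRz
      have h2 : Tendsto (fun n => Real.sqrt (G n * R n)) atTop (𝓝 0) := by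
        have := (Real.continuous_sqrt.tendsto 0).comp h1
        simpa [Function.comp_def] using this
      simpa using (h2.const_mul (2 : ℝ)).add hRz
    have hFGz : Tendsto (fun n => F n - G n) atTop (𝓝 0) := by
      have habs : Tendsto (fun n => |F n - G n|) atTop (𝓝 0) :=
        squeeze_zero (fun n => abs_nonneg _) hFG hBz
      refine tendsto_of_tendsto_of_tendsto_of_le_of_le (f := fun n => F n - G n)
        (g := fun n => -|F n - G n|) (h := fun n => |F n - G n|)
        ?_ habs (fun n => neg_abs_le _) (fun n => le_abs_self _)
      simpa using habs.neg
    have hFl : Tendsto F atTop (𝓝 (ψ t)) := by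
      have h := hFGz.add hGl
      simpa using h
    refine hFl.congr fun n => ?_
    rw [hF, ← Finset.sum_filter]
    exact Finset.sum_congr rfl fun i _ => by rw [ha, hb, hc]; ring_nf
end

section
/- There exists a continuous function X : [0,1] → ℝ such that, writing Q_n(X) = Σ_{k=0}^{2^n − 1} (X((k+1)/2^n) − X(k/2^n))² for the quadratic variation sum along the dyadic partition of level n, one has limsup_{n→∞} Q_n(X) = +∞ and liminf_{n→∞} Q_n(X) = 0. -/
open Filter Topology

/-- The level-`n` dyadic quadratic variation sum of `X : ℝ → ℝ` on `[0,1]`. -/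
noncomputable def dyadicQVSum (X : ℝ → ℝ) (n : ℕ) : ℝ :=
  ∑ k ∈ Finset.range (2 ^ n), (X (((k : ℝ) + 1) / 2 ^ n) - X ((k : ℝ) / 2 ^ n)) ^ 2

namespace QVAux

open Real

/-- The rapidly growing sequence of scale exponents. -/
def Mf : ℕ → ℕ
  | 0 => 0
  | m + 1 => 2 * Mf m + m + 10

lemma Mf_succ (m : ℕ) : Mf (m + 1) = 2 * Mf m + m + 10 := rfl

lemma Mf_ge (m : ℕ) : 2 * m ≤ Mf m := by
  induction m with
  | zero => simp [Mf]
  | succ n ih => rw [Mf_succ]; omega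

lemma Mf_mono : StrictMono Mf :=
  strictMono_nat_of_lt_succ (fun n => by rw [Mf_succ]; omega)

/-- Partial weighted sums. -/
def Tn (m : ℕ) : ℕ := ∑ j ∈ Finset.range m, j * 2 ^ (Mf j)

lemma Tn_le (m : ℕ) : Tn (m + 1) ≤ 2 ^ (Mf m + m + 3) := by
  induction m with
  | zero => simp [Tn]
  | succ n ih =>
    have h1 : Tn (n + 2) = Tn (n + 1) + (n + 1) * 2 ^ (Mf (n + 1)) :=
      Finset.sum_range_succ _ _
    have h2 : (n + 1) ≤ 2 ^ (n + 1) := (Nat.lt_two_pow_self (n := n + 1)).le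
    have h3 : Mf n + n + 3 ≤ Mf (n + 1) := by rw [Mf_succ]; omega
    have hc : 1 + 2 ^ (n + 1) ≤ 2 ^ (n + 2) := by
      have h4 : 1 ≤ 2 ^ (n + 1) := Nat.one_le_two_pow
      have h5 : 2 ^ (n + 2) = 2 ^ (n + 1) + 2 ^ (n + 1) := by ring
      omega
    calc Tn (n + 2) = Tn (n + 1) + (n + 1) * 2 ^ (Mf (n + 1)) := h1
      _ ≤ 2 ^ (Mf n + n + 3) + (n + 1) * 2 ^ (Mf (n + 1)) := by gcongr
      _ ≤ 2 ^ (Mf (n + 1)) + 2 ^ (n + 1) * 2 ^ (Mf (n + 1)) :=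
          Nat.add_le_add (Nat.pow_le_pow_right (by norm_num) h3)
            (Nat.mul_le_mul_right _ h2)
      _ = (1 + 2 ^ (n + 1)) * 2 ^ (Mf (n + 1)) := by ring
      _ ≤ 2 ^ (n + 2) * 2 ^ (Mf (n + 1)) := Nat.mul_le_mul_right _ hc
      _ = 2 ^ ((n + 2) + Mf (n + 1)) := (pow_add 2 _ _).symm
      _ ≤ 2 ^ (Mf (n + 1) + (n + 1) + 3) := Nat.pow_le_pow_right (by norm_num) (by omega)

lemma key1 {m : ℕ} (hm : 1 ≤ m) : 4 * Tn m ≤ 2 ^ (Mf m) := by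
  obtain ⟨n, rfl⟩ : ∃ n, m = n + 1 := ⟨m - 1, by omega⟩
  have h1 : Tn (n + 1) ≤ 2 ^ (Mf n + n + 3) := Tn_le n
  have h2 : Mf n + n + 5 ≤ Mf (n + 1) := by rw [Mf_succ]; omega
  calc 4 * Tn (n + 1) ≤ 4 * 2 ^ (Mf n + n + 3) := by gcongr
    _ = 2 ^ (Mf n + n + 5) := by ring
    _ ≤ 2 ^ (Mf (n + 1)) := Nat.pow_le_pow_right (by norm_num) h2

lemma key2 (m : ℕ) : 64 * Tn (m + 1) ^ 2 * 2 ^ m ≤ 2 ^ (2 * Mf (m + 1)) := by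
  have h1 := Tn_le m
  have h2 := Mf_ge m
  calc 64 * Tn (m + 1) ^ 2 * 2 ^ m ≤ 64 * (2 ^ (Mf m + m + 3)) ^ 2 * 2 ^ m := by gcongr
    _ = 2 ^ (2 * Mf m + 3 * m + 12) := by rw [← pow_mul]; ring
    _ ≤ 2 ^ (2 * Mf (m + 1)) := by
        gcongr
        · norm_num
        · rw [Mf_succ]; omega

/-- Coefficients. -/
noncomputable def cf (m : ℕ) : ℝ := m / 2 ^ (Mf m)

lemma cf_nonneg (m : ℕ) : 0 ≤ cf m := by
  unfold cf; positivity

lemma cf_le (m : ℕ) : cf m ≤ (1 / 2 : ℝ) ^ m := by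
  have h1 : (m : ℝ) ≤ 2 ^ m := by
    exact_mod_cast (Nat.lt_two_pow_self (n := m)).le
  have h2 : (2 : ℝ) ^ (2 * m) ≤ 2 ^ (Mf m) := by
    have := Mf_ge m
    gcongr <;> norm_num
  have h3 : cf m ≤ (2 : ℝ) ^ m / 2 ^ (2 * m) := by
    apply div_le_div₀ (by positivity) h1 (by positivity) h2
  calc cf m ≤ (2 : ℝ) ^ m / 2 ^ (2 * m) := h3
    _ = (1 / 2 : ℝ) ^ m := by
        rw [two_mul, pow_add, div_pow, one_pow]
        field_simp
  
lemma cf_summable : Summable cf :=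
  Summable.of_nonneg_of_le cf_nonneg cf_le
    (summable_geometric_of_lt_one (by norm_num) (by norm_num))

/-- The function. -/
noncomputable def Xf (t : ℝ) : ℝ := ∑' m, cf m * Real.cos (2 * π * 2 ^ (2 * Mf m) * t)

lemma term_bound (m : ℕ) (t : ℝ) : ‖cf m * Real.cos (2 * π * 2 ^ (2 * Mf m) * t)‖ ≤ cf m := by
  rw [Real.norm_eq_abs, abs_mul, abs_of_nonneg (cf_nonneg m)]
  calc cf m * |Real.cos (2 * π * 2 ^ (2 * Mf m) * t)| ≤ cf m * 1 := by
        exact mul_le_mul_of_nonneg_left (Real.abs_cos_le_one _) (cf_nonneg m)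
    _ = cf m := mul_one _

lemma term_summable (t : ℝ) : Summable (fun m => cf m * Real.cos (2 * π * 2 ^ (2 * Mf m) * t)) :=
  Summable.of_norm_bounded cf_summable (fun m => term_bound m t)

lemma Xf_continuous : Continuous Xf := by
  apply continuous_tsum (fun i => by continuity) cf_summable
  intro m t
  exact term_bound m t

lemma cos_eq_one (a N n : ℕ) (h : n ≤ N) :
    Real.cos (2 * π * 2 ^ N * ((a : ℝ) / 2 ^ n)) = 1 := by
  have h2 : (2 : ℝ) ^ N = 2 ^ (N - n) * 2 ^ n := by
    rw [← pow_add, Nat.sub_add_cancel h]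
  have h3 : 2 * π * 2 ^ N * ((a : ℝ) / 2 ^ n) = ((a * 2 ^ (N - n) : ℕ) : ℝ) * (2 * π) := by
    push_cast
    rw [h2]
    have : (2 : ℝ) ^ n ≠ 0 := by positivity
    field_simp
  rw [h3, Real.cos_nat_mul_two_pi]

lemma cos_nat_pi (a : ℕ) : Real.cos ((a : ℝ) * π) = (-1 : ℝ) ^ a := by
  induction a with
  | zero => simp
  | succ n ih =>
    push_cast
    rw [add_mul, one_mul, Real.cos_add_pi, ih]
    ring

lemma cos_eq_pow (a M : ℕ) :
    Real.cos (2 * π * 2 ^ (2 * M) * ((a : ℝ) / 2 ^ (2 * M + 1))) = (-1 : ℝ) ^ a := by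
  have h : 2 * π * 2 ^ (2 * M) * ((a : ℝ) / 2 ^ (2 * M + 1)) = (a : ℝ) * π := by
    rw [pow_succ]
    have : (2 : ℝ) ^ (2 * M) ≠ 0 := by positivity
    field_simp
  rw [h, cos_nat_pi]

lemma cos_diff_le (x y : ℝ) : |Real.cos x - Real.cos y| ≤ |x - y| := by
  rw [Real.cos_sub_cos]
  have h1 : |Real.sin ((x + y) / 2)| ≤ 1 := Real.abs_sin_le_one _
  have h2 : |Real.sin ((x - y) / 2)| ≤ |(x - y) / 2| := Real.abs_sin_le_abs
  calc |(-2) * Real.sin ((x + y) / 2) * Real.sin ((x - y) / 2)|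
      = 2 * |Real.sin ((x + y) / 2)| * |Real.sin ((x - y) / 2)| := by
        rw [abs_mul, abs_mul]; norm_num
    _ ≤ 2 * 1 * |(x - y) / 2| := by
        apply mul_le_mul _ h2 (abs_nonneg _) (by norm_num)
        nlinarith [abs_nonneg (Real.sin ((x+y)/2))]
    _ = |x - y| := by rw [abs_div, abs_two]; ring

/-- The fundamental increment formula over level-`n` dyadic points. -/
lemma incr (n m : ℕ) (h : n ≤ 2 * Mf (m + 1)) (a b : ℕ) :
    Xf ((a : ℝ) / 2 ^ n) - Xf ((b : ℝ) / 2 ^ n) =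
      ∑ j ∈ Finset.range (m + 1), cf j *
        (Real.cos (2 * π * 2 ^ (2 * Mf j) * ((a : ℝ) / 2 ^ n)) -
         Real.cos (2 * π * 2 ^ (2 * Mf j) * ((b : ℝ) / 2 ^ n))) := by
  have hds : HasSum (fun j => cf j * Real.cos (2 * π * 2 ^ (2 * Mf j) * ((a : ℝ) / 2 ^ n)) -
      cf j * Real.cos (2 * π * 2 ^ (2 * Mf j) * ((b : ℝ) / 2 ^ n)))
      (Xf ((a : ℝ) / 2 ^ n) - Xf ((b : ℝ) / 2 ^ n)) :=
    (term_summable _).hasSum.sub (term_summable _).hasSum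
  rw [← hds.tsum_eq]
  have heq : ∀ j : ℕ, cf j * Real.cos (2 * π * 2 ^ (2 * Mf j) * ((a : ℝ) / 2 ^ n)) -
      cf j * Real.cos (2 * π * 2 ^ (2 * Mf j) * ((b : ℝ) / 2 ^ n)) =
      cf j * (Real.cos (2 * π * 2 ^ (2 * Mf j) * ((a : ℝ) / 2 ^ n)) -
        Real.cos (2 * π * 2 ^ (2 * Mf j) * ((b : ℝ) / 2 ^ n))) := fun j => (mul_sub _ _ _).symm
  rw [tsum_congr heq]
  apply tsum_eq_sum
  intro j hj
  have hj' : m + 1 ≤ j := by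
    by_contra hc
    exact hj (Finset.mem_range.mpr (by omega))
  have hnj : n ≤ 2 * Mf j := by
    have := Mf_mono.monotone hj'
    omega
  rw [cos_eq_one a _ n hnj, cos_eq_one b _ n hnj, sub_self, mul_zero]

lemma qv_nonneg (X : ℝ → ℝ) (n : ℕ) : 0 ≤ dyadicQVSum X n :=
  Finset.sum_nonneg (fun _ _ => sq_nonneg _)

/-- Lower bound at level `2 * Mf m + 1`. -/
lemma lower {m : ℕ} (hm : 1 ≤ m) : (m : ℝ) ≤ dyadicQVSum Xf (2 * Mf m + 1) := by
  set n := 2 * Mf m + 1 with hn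
  have hpow : (0 : ℝ) < 2 ^ n := by positivity
  have hMpow : (0 : ℝ) < 2 ^ (Mf m) := by positivity
  have hcm : (1 : ℝ) / 2 ^ (Mf m) ≤ cf m := by
    unfold cf
    gcongr
    exact_mod_cast hm
  -- bound on the remainder sum
  have hR : ∀ k : ℕ,
      |∑ j ∈ Finset.range m, cf j *
        (Real.cos (2 * π * 2 ^ (2 * Mf j) * (((k + 1 : ℕ) : ℝ) / 2 ^ n)) -
         Real.cos (2 * π * 2 ^ (2 * Mf j) * (((k : ℕ) : ℝ) / 2 ^ n)))| ≤ 1 / 2 ^ (Mf m) := by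
    intro k
    have step : ∀ j ∈ Finset.range m,
        |cf j * (Real.cos (2 * π * 2 ^ (2 * Mf j) * (((k + 1 : ℕ) : ℝ) / 2 ^ n)) -
          Real.cos (2 * π * 2 ^ (2 * Mf j) * (((k : ℕ) : ℝ) / 2 ^ n)))| ≤
          2 * π / 2 ^ n * ((j : ℝ) * 2 ^ (Mf j)) := by
      intro j _
      rw [abs_mul, abs_of_nonneg (cf_nonneg j)]
      have harg : 2 * π * 2 ^ (2 * Mf j) * (((k + 1 : ℕ) : ℝ) / 2 ^ n) -
          2 * π * 2 ^ (2 * Mf j) * (((k : ℕ) : ℝ) / 2 ^ n) = 2 * π * 2 ^ (2 * Mf j) / 2 ^ n := by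
        push_cast
        field_simp
        ring
      have h1 : |Real.cos (2 * π * 2 ^ (2 * Mf j) * (((k + 1 : ℕ) : ℝ) / 2 ^ n)) -
          Real.cos (2 * π * 2 ^ (2 * Mf j) * (((k : ℕ) : ℝ) / 2 ^ n))| ≤
          2 * π * 2 ^ (2 * Mf j) / 2 ^ n := by
        have := cos_diff_le (2 * π * 2 ^ (2 * Mf j) * (((k + 1 : ℕ) : ℝ) / 2 ^ n))
          (2 * π * 2 ^ (2 * Mf j) * (((k : ℕ) : ℝ) / 2 ^ n))
        rw [harg] at this
        calc _ ≤ |2 * π * 2 ^ (2 * Mf j) / 2 ^ n| := this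
          _ = 2 * π * 2 ^ (2 * Mf j) / 2 ^ n := by
              rw [abs_of_nonneg]; positivity
      calc cf j * |Real.cos (2 * π * 2 ^ (2 * Mf j) * (((k + 1 : ℕ) : ℝ) / 2 ^ n)) -
            Real.cos (2 * π * 2 ^ (2 * Mf j) * (((k : ℕ) : ℝ) / 2 ^ n))|
          ≤ cf j * (2 * π * 2 ^ (2 * Mf j) / 2 ^ n) := by
            exact mul_le_mul_of_nonneg_left h1 (cf_nonneg j)
        _ = 2 * π / 2 ^ n * ((j : ℝ) * 2 ^ (Mf j)) := by
            unfold cf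
            rw [two_mul (Mf j), pow_add]
            field_simp
    calc |∑ j ∈ Finset.range m, cf j *
          (Real.cos (2 * π * 2 ^ (2 * Mf j) * (((k + 1 : ℕ) : ℝ) / 2 ^ n)) -
           Real.cos (2 * π * 2 ^ (2 * Mf j) * (((k : ℕ) : ℝ) / 2 ^ n)))|
        ≤ ∑ j ∈ Finset.range m, |cf j *
          (Real.cos (2 * π * 2 ^ (2 * Mf j) * (((k + 1 : ℕ) : ℝ) / 2 ^ n)) -
           Real.cos (2 * π * 2 ^ (2 * Mf j) * (((k : ℕ) : ℝ) / 2 ^ n)))| :=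
          Finset.abs_sum_le_sum_abs _ _
      _ ≤ ∑ j ∈ Finset.range m, 2 * π / 2 ^ n * ((j : ℝ) * 2 ^ (Mf j)) :=
          Finset.sum_le_sum step
      _ = 2 * π / 2 ^ n * (Tn m : ℝ) := by
          rw [← Finset.mul_sum, Tn]
          push_cast
          ring
      _ ≤ 1 / 2 ^ (Mf m) := by
          have hT : (4 : ℝ) * (Tn m : ℝ) ≤ 2 ^ (Mf m) := by
            exact_mod_cast key1 hm
          have hπ : π ≤ 4 := Real.pi_le_four
          have hTnn : (0 : ℝ) ≤ (Tn m : ℝ) := Nat.cast_nonneg _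
          have h2n : (2 : ℝ) ^ n = 2 * (2 ^ (Mf m) * 2 ^ (Mf m)) := by
            rw [hn, pow_succ, two_mul (Mf m), pow_add]
            ring
          rw [div_mul_eq_mul_div, div_le_div_iff₀ hpow hMpow, h2n]
          have e0 : π * (Tn m : ℝ) ≤ 4 * (Tn m : ℝ) :=
            mul_le_mul_of_nonneg_right hπ hTnn
          have e1 : 2 * π * (Tn m : ℝ) ≤ 2 * 2 ^ (Mf m) := by linarith
          nlinarith [mul_le_mul_of_nonneg_right e1 hMpow.le]
  -- per-interval lower bound
  have key : ∀ k : ℕ, cf m ^ 2 ≤ (Xf (((k : ℝ) + 1) / 2 ^ n) - Xf ((k : ℝ) / 2 ^ n)) ^ 2 := by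
    intro k
    have hle : n ≤ 2 * Mf (m + 1) := by
      have := Mf_mono (by omega : m < m + 1)
      omega
    have hd := incr n m hle (k + 1) k
    rw [Finset.sum_range_succ] at hd
    have hc1 : Real.cos (2 * π * 2 ^ (2 * Mf m) * (((k + 1 : ℕ) : ℝ) / 2 ^ n)) =
        (-1 : ℝ) ^ (k + 1) := cos_eq_pow (k + 1) (Mf m)
    have hc2 : Real.cos (2 * π * 2 ^ (2 * Mf m) * (((k : ℕ) : ℝ) / 2 ^ n)) =
        (-1 : ℝ) ^ k := cos_eq_pow k (Mf m)
    rw [hc1, hc2] at hd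
    have hmain : |cf m * ((-1 : ℝ) ^ (k + 1) - (-1 : ℝ) ^ k)| = 2 * cf m := by
      have h6 : |(-1 : ℝ) ^ (k + 1) - (-1 : ℝ) ^ k| = 2 := by
        rcases Nat.even_or_odd k with hk | hk
        · rw [hk.neg_one_pow, Odd.neg_one_pow hk.add_one]; norm_num
        · rw [hk.neg_one_pow, Even.neg_one_pow hk.add_one]; norm_num
      rw [abs_mul, abs_of_nonneg (cf_nonneg m), h6]
      ring
    set R := ∑ j ∈ Finset.range m, cf j *
        (Real.cos (2 * π * 2 ^ (2 * Mf j) * (((k + 1 : ℕ) : ℝ) / 2 ^ n)) -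
         Real.cos (2 * π * 2 ^ (2 * Mf j) * (((k : ℕ) : ℝ) / 2 ^ n))) with hRdef
    have hD : Xf (((k : ℝ) + 1) / 2 ^ n) - Xf ((k : ℝ) / 2 ^ n) =
        R + cf m * ((-1 : ℝ) ^ (k + 1) - (-1 : ℝ) ^ k) := by
      have hcast : ((k : ℝ) + 1) = ((k + 1 : ℕ) : ℝ) := by push_cast; ring
      rw [hcast]
      exact hd
    have hRb : |R| ≤ cf m := le_trans (hR k) hcm
    have habs : cf m ≤ |Xf (((k : ℝ) + 1) / 2 ^ n) - Xf ((k : ℝ) / 2 ^ n)| := by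
      rw [hD]
      have : 2 * cf m - |R| ≤ |R + cf m * ((-1 : ℝ) ^ (k + 1) - (-1 : ℝ) ^ k)| := by
        have h4 : |cf m * ((-1 : ℝ) ^ (k + 1) - (-1 : ℝ) ^ k)| -
            |R + cf m * ((-1 : ℝ) ^ (k + 1) - (-1 : ℝ) ^ k)| ≤ |R| := by
          calc _ ≤ |cf m * ((-1 : ℝ) ^ (k + 1) - (-1 : ℝ) ^ k) -
              (R + cf m * ((-1 : ℝ) ^ (k + 1) - (-1 : ℝ) ^ k))| := abs_sub_abs_le_abs_sub _ _
            _ = |R| := by rw [show cf m * ((-1 : ℝ) ^ (k + 1) - (-1 : ℝ) ^ k) -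
                (R + cf m * ((-1 : ℝ) ^ (k + 1) - (-1 : ℝ) ^ k)) = -R by ring, abs_neg]
        rw [hmain] at h4
        linarith
      linarith
    calc cf m ^ 2 ≤ |Xf (((k : ℝ) + 1) / 2 ^ n) - Xf ((k : ℝ) / 2 ^ n)| ^ 2 :=
          pow_le_pow_left₀ (cf_nonneg m) habs 2
      _ = (Xf (((k : ℝ) + 1) / 2 ^ n) - Xf ((k : ℝ) / 2 ^ n)) ^ 2 := sq_abs _
  -- sum up
  have hsum : (2 ^ n : ℝ) * cf m ^ 2 ≤ dyadicQVSum Xf n := by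
    rw [dyadicQVSum]
    have h0 : ∑ _k ∈ Finset.range (2 ^ n), cf m ^ 2 ≤
        ∑ k ∈ Finset.range (2 ^ n), (Xf (((k : ℝ) + 1) / 2 ^ n) - Xf ((k : ℝ) / 2 ^ n)) ^ 2 :=
      Finset.sum_le_sum (fun k _ => key k)
    have h1 : ∑ _k ∈ Finset.range (2 ^ n), cf m ^ 2 = (2 ^ n : ℝ) * cf m ^ 2 := by
      rw [Finset.sum_const, Finset.card_range, nsmul_eq_mul]
      push_cast
      ring
    linarith [h0, h1.ge]
  have hval : (2 ^ n : ℝ) * cf m ^ 2 = 2 * (m : ℝ) ^ 2 := by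
    unfold cf
    rw [hn, pow_succ, two_mul (Mf m), pow_add]
    field_simp
  have hm' : (1 : ℝ) ≤ (m : ℝ) := by exact_mod_cast hm
  nlinarith [hsum, hval]

/-- Upper bound at level `2 * Mf (m+1)`. -/
lemma upper (m : ℕ) : dyadicQVSum Xf (2 * Mf (m + 1)) ≤ (1 / 2 : ℝ) ^ m := by
  set n := 2 * Mf (m + 1) with hn
  have hpow : (0 : ℝ) < 2 ^ n := by positivity
  set B : ℝ := 2 * π / 2 ^ n * (Tn (m + 1) : ℝ) with hB
  have hBnn : 0 ≤ B := by
    rw [hB]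
    positivity
  have key : ∀ k : ℕ, (Xf (((k : ℝ) + 1) / 2 ^ n) - Xf ((k : ℝ) / 2 ^ n)) ^ 2 ≤ B ^ 2 := by
    intro k
    have hd := incr n m (le_refl n) (k + 1) k
    have hcast : ((k : ℝ) + 1) = ((k + 1 : ℕ) : ℝ) := by push_cast; ring
    have habs : |Xf (((k : ℝ) + 1) / 2 ^ n) - Xf ((k : ℝ) / 2 ^ n)| ≤ B := by
      rw [hcast, hd]
      have step : ∀ j ∈ Finset.range (m + 1),
          |cf j * (Real.cos (2 * π * 2 ^ (2 * Mf j) * (((k + 1 : ℕ) : ℝ) / 2 ^ n)) -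
            Real.cos (2 * π * 2 ^ (2 * Mf j) * (((k : ℕ) : ℝ) / 2 ^ n)))| ≤
            2 * π / 2 ^ n * ((j : ℝ) * 2 ^ (Mf j)) := by
        intro j _
        rw [abs_mul, abs_of_nonneg (cf_nonneg j)]
        have harg : 2 * π * 2 ^ (2 * Mf j) * (((k + 1 : ℕ) : ℝ) / 2 ^ n) -
            2 * π * 2 ^ (2 * Mf j) * (((k : ℕ) : ℝ) / 2 ^ n) = 2 * π * 2 ^ (2 * Mf j) / 2 ^ n := by
          push_cast
          field_simp
          ring
        have h1 : |Real.cos (2 * π * 2 ^ (2 * Mf j) * (((k + 1 : ℕ) : ℝ) / 2 ^ n)) -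
            Real.cos (2 * π * 2 ^ (2 * Mf j) * (((k : ℕ) : ℝ) / 2 ^ n))| ≤
            2 * π * 2 ^ (2 * Mf j) / 2 ^ n := by
          have := cos_diff_le (2 * π * 2 ^ (2 * Mf j) * (((k + 1 : ℕ) : ℝ) / 2 ^ n))
            (2 * π * 2 ^ (2 * Mf j) * (((k : ℕ) : ℝ) / 2 ^ n))
          rw [harg] at this
          calc _ ≤ |2 * π * 2 ^ (2 * Mf j) / 2 ^ n| := this
            _ = 2 * π * 2 ^ (2 * Mf j) / 2 ^ n := by
                rw [abs_of_nonneg]; positivity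
        calc cf j * |Real.cos (2 * π * 2 ^ (2 * Mf j) * (((k + 1 : ℕ) : ℝ) / 2 ^ n)) -
              Real.cos (2 * π * 2 ^ (2 * Mf j) * (((k : ℕ) : ℝ) / 2 ^ n))|
            ≤ cf j * (2 * π * 2 ^ (2 * Mf j) / 2 ^ n) :=
              mul_le_mul_of_nonneg_left h1 (cf_nonneg j)
          _ = 2 * π / 2 ^ n * ((j : ℝ) * 2 ^ (Mf j)) := by
              unfold cf
              rw [two_mul (Mf j), pow_add]
              field_simp
      calc |∑ j ∈ Finset.range (m + 1), cf j *
            (Real.cos (2 * π * 2 ^ (2 * Mf j) * (((k + 1 : ℕ) : ℝ) / 2 ^ n)) -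
             Real.cos (2 * π * 2 ^ (2 * Mf j) * (((k : ℕ) : ℝ) / 2 ^ n)))|
          ≤ ∑ j ∈ Finset.range (m + 1), |cf j *
            (Real.cos (2 * π * 2 ^ (2 * Mf j) * (((k + 1 : ℕ) : ℝ) / 2 ^ n)) -
             Real.cos (2 * π * 2 ^ (2 * Mf j) * (((k : ℕ) : ℝ) / 2 ^ n)))| :=
            Finset.abs_sum_le_sum_abs _ _
        _ ≤ ∑ j ∈ Finset.range (m + 1), 2 * π / 2 ^ n * ((j : ℝ) * 2 ^ (Mf j)) :=
            Finset.sum_le_sum step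
        _ = B := by
            rw [hB, ← Finset.mul_sum, Tn]
            push_cast
            ring
    calc (Xf (((k : ℝ) + 1) / 2 ^ n) - Xf ((k : ℝ) / 2 ^ n)) ^ 2
        = |Xf (((k : ℝ) + 1) / 2 ^ n) - Xf ((k : ℝ) / 2 ^ n)| ^ 2 := (sq_abs _).symm
      _ ≤ B ^ 2 := pow_le_pow_left₀ (abs_nonneg _) habs 2
  have hsum : dyadicQVSum Xf n ≤ (2 ^ n : ℝ) * B ^ 2 := by
    rw [dyadicQVSum]
    have h0 : ∑ k ∈ Finset.range (2 ^ n), (Xf (((k : ℝ) + 1) / 2 ^ n) - Xf ((k : ℝ) / 2 ^ n)) ^ 2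
        ≤ ∑ _k ∈ Finset.range (2 ^ n), B ^ 2 := Finset.sum_le_sum (fun k _ => key k)
    have h1 : ∑ _k ∈ Finset.range (2 ^ n), B ^ 2 = (2 ^ n : ℝ) * B ^ 2 := by
      rw [Finset.sum_const, Finset.card_range, nsmul_eq_mul]
      push_cast
      ring
    linarith [h0, h1.le]
  have hfinal : (2 ^ n : ℝ) * B ^ 2 ≤ (1 / 2 : ℝ) ^ m := by
    have hk2 : (64 : ℝ) * (Tn (m + 1) : ℝ) ^ 2 * 2 ^ m ≤ 2 ^ n := by
      have := key2 m
      rw [← hn] at this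
      exact_mod_cast this
    have hπ : π ≤ 4 := Real.pi_le_four
    have hπ0 : 0 < π := Real.pi_pos
    have hTnn : (0 : ℝ) ≤ (Tn (m + 1) : ℝ) := Nat.cast_nonneg _
    have hmp : (0 : ℝ) < 2 ^ m := by positivity
    have hBn : B * 2 ^ n = 2 * π * (Tn (m + 1) : ℝ) := by
      rw [hB]
      field_simp
    have hBn' : B * 2 ^ n ≤ 8 * (Tn (m + 1) : ℝ) := by
      rw [hBn]
      nlinarith [mul_le_mul_of_nonneg_right hπ hTnn]
    have hsq : (B * 2 ^ n) ^ 2 ≤ 64 * (Tn (m + 1) : ℝ) ^ 2 := by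
      have h8 : (B * 2 ^ n) ^ 2 ≤ (8 * (Tn (m + 1) : ℝ)) ^ 2 := by
        apply pow_le_pow_left₀ (by positivity) hBn'
      nlinarith [h8]
    have hX : (2 ^ n * B ^ 2 * 2 ^ m) * 2 ^ n = (B * 2 ^ n) ^ 2 * 2 ^ m := by ring
    have hle1 : (2 ^ n * B ^ 2 * 2 ^ m) * 2 ^ n ≤ 1 * 2 ^ n := by
      rw [hX, one_mul]
      calc (B * 2 ^ n) ^ 2 * 2 ^ m ≤ 64 * (Tn (m + 1) : ℝ) ^ 2 * 2 ^ m :=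
            mul_le_mul_of_nonneg_right hsq hmp.le
        _ ≤ 2 ^ n := hk2
    have hle2 : (2 ^ n : ℝ) * B ^ 2 * 2 ^ m ≤ 1 := le_of_mul_le_mul_right hle1 hpow
    have hhalf : (1 / 2 : ℝ) ^ m = 1 / 2 ^ m := by rw [div_pow, one_pow]
    rw [hhalf, le_div_iff₀ hmp]
    exact hle2
  calc dyadicQVSum Xf n ≤ (2 ^ n : ℝ) * B ^ 2 := hsum
    _ ≤ (1 / 2 : ℝ) ^ m := hfinal

end QVAux

/-- There exists a continuous function `X` on `[0,1]` whose dyadic quadratic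
variation sums `Q_n(X)` satisfy `limsup Q_n(X) = +∞` and `liminf Q_n(X) = 0`. -/
theorem exists_continuous_limsup_qv_top_liminf_qv_zero :
    ∃ X : ℝ → ℝ, ContinuousOn X (Set.Icc 0 1) ∧
      Filter.limsup (fun n => ((dyadicQVSum X n : ℝ) : EReal)) atTop = ⊤ ∧
      Filter.liminf (fun n => ((dyadicQVSum X n : ℝ) : EReal)) atTop = 0 := by
  classical
  refine ⟨QVAux.Xf, QVAux.Xf_continuous.continuousOn, ?_, ?_⟩
  · -- limsup = ⊤
    set u : ℕ → EReal := fun n => ((dyadicQVSum QVAux.Xf n : ℝ) : EReal) with hu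
    set φ : ℕ → ℕ := fun m => 2 * QVAux.Mf m + 1 with hφ
    have hφmono : StrictMono φ := fun a b hab => by
      have := QVAux.Mf_mono hab
      simp only [hφ]
      omega
    have hmap : Filter.map φ atTop ≤ atTop := hφmono.tendsto_atTop
    have htop : Filter.Tendsto (u ∘ φ) atTop (𝓝 ⊤) := by
      rw [EReal.tendsto_nhds_top_iff_real]
      intro x
      filter_upwards [eventually_ge_atTop (max 1 (⌈x⌉₊ + 1))] with m hm
      have hm1 : 1 ≤ m := le_trans (le_max_left _ _) hm
      have hm2 : ⌈x⌉₊ + 1 ≤ m := le_trans (le_max_right _ _) hm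
      have hxm : x < (m : ℝ) := by
        calc x ≤ (⌈x⌉₊ : ℝ) := Nat.le_ceil x
          _ < (m : ℝ) := by exact_mod_cast Nat.lt_of_lt_of_le (Nat.lt_succ_self _) hm2
      have hlow := QVAux.lower hm1
      have hxq : x < dyadicQVSum QVAux.Xf (φ m) := lt_of_lt_of_le hxm hlow
      simp only [hu, hφ, Function.comp_apply]
      exact_mod_cast EReal.coe_lt_coe_iff.mpr hxq
    have h1 : Filter.limsup u (Filter.map φ atTop) = Filter.limsup (u ∘ φ) atTop := by
      rw [Filter.limsup, Filter.limsup, Filter.map_map]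
    have h2 : Filter.limsup (u ∘ φ) atTop = ⊤ := htop.limsup_eq
    have h3 : Filter.limsup u (Filter.map φ atTop) ≤ Filter.limsup u atTop :=
      Filter.limsup_le_limsup_of_le hmap
    rw [h1, h2] at h3
    exact top_le_iff.mp h3
  · -- liminf = 0
    set u : ℕ → EReal := fun n => ((dyadicQVSum QVAux.Xf n : ℝ) : EReal) with hu
    set φ : ℕ → ℕ := fun m => 2 * QVAux.Mf (m + 1) with hφ
    have hφmono : StrictMono φ := fun a b hab => by
      have := QVAux.Mf_mono (by omega : a + 1 < b + 1)
      simp only [hφ]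
      omega
    have hmap : Filter.map φ atTop ≤ atTop := hφmono.tendsto_atTop
    have hzero : Filter.Tendsto (fun m => dyadicQVSum QVAux.Xf (φ m)) atTop (𝓝 (0 : ℝ)) := by
      apply squeeze_zero (fun m => QVAux.qv_nonneg _ _) (fun m => QVAux.upper m)
      exact tendsto_pow_atTop_nhds_zero_of_lt_one (by norm_num) (by norm_num)
    have htend : Filter.Tendsto (u ∘ φ) atTop (𝓝 (0 : EReal)) := by
      have := (EReal.tendsto_coe (a := (0 : ℝ))).mpr hzero
      simp only [EReal.coe_zero] at this
      exact this
    have h1 : Filter.liminf u (Filter.map φ atTop) = Filter.liminf (u ∘ φ) atTop := by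
      rw [Filter.liminf, Filter.liminf, Filter.map_map]
    have h2 : Filter.liminf (u ∘ φ) atTop = 0 := htend.liminf_eq
    have h3 : Filter.liminf u atTop ≤ Filter.liminf u (Filter.map φ atTop) :=
      Filter.liminf_le_liminf_of_le hmap
    rw [h1, h2] at h3
    have h4 : (0 : EReal) ≤ Filter.liminf u atTop := by
      apply Filter.le_liminf_of_le (by isBoundedDefault)
      apply Filter.Eventually.of_forall
      intro n
      have h5 := QVAux.qv_nonneg QVAux.Xf n
      simp only [hu]
      exact_mod_cast EReal.coe_le_coe_iff.mpr h5
    exact le_antisymm h3 h4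
end
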